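/- arXiv:0704.2491 — 4 statements merged into one kernel-verified Lean document; each statement's English description precedes it below -/
import Mathlib

section
/- Let σ, τ be finite Borel measures on ℝ and σ^ν, τ^ν sequences of finite Borel measures with uniformly bounded total mass, such that σ^ν(I) → σ(I) and τ^ν(I) → τ(I) for every interval I ⊆ ℝ (including singletons and half-lines). Then the product measures converge on the open half-plane below the diagonal: (σ^ν ⊗ τ^ν)({(x,y) ∈ ℝ² : x < y}) → (σ ⊗ τ)({(x,y) ∈ ℝ² : x < y}), provided that for every ε > 0 there exists a finite partition -∞ = x_0 < x_1 < ... < x_N < x_{N+1} = +∞ with σ((x_{α-1}, x_α)) ≤ ε and τ((x_{α-1}, x_α)) ≤ ε for all α. -/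
open Filter Set MeasureTheory

namespace Stmt6Aux

variable {N : ℕ}

/-- Left-closed partition pieces: `A 0 = Iic (x 0)`, `A (i+1) = Ioc (x i) (x (i+1))`. -/
def A (x : Fin (N + 1) → ℝ) : Fin (N + 1) → Set ℝ :=
  Fin.cases (Set.Iic (x 0)) (fun i => Set.Ioc (x i.castSucc) (x i.succ))

/-- First factors of the diagonal cover. -/
def F (x : Fin (N + 1) → ℝ) : Fin (N + 2) → Set ℝ :=
  Fin.cases (Set.Iio (x 0))
    (Fin.lastCases (Set.Ioi (x (Fin.last N))) fun i => Set.Ioo (x i.castSucc) (x i.succ))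

/-- Second factors of the diagonal cover. -/
def B (x : Fin (N + 1) → ℝ) : Fin (N + 2) → Set ℝ :=
  Fin.cases (Set.Iic (x 0))
    (Fin.lastCases (Set.Ioi (x (Fin.last N))) fun i => Set.Ioc (x i.castSucc) (x i.succ))

lemma A_zero (x : Fin (N + 1) → ℝ) : A x 0 = Set.Iic (x 0) := by
  unfold A; rw [Fin.cases_zero]

lemma A_succ (x : Fin (N + 1) → ℝ) (i : Fin N) :
    A x i.succ = Set.Ioc (x i.castSucc) (x i.succ) := by
  unfold A; rw [Fin.cases_succ]

lemma F_zero (x : Fin (N + 1) → ℝ) : F x 0 = Set.Iio (x 0) := by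
  unfold F; rw [Fin.cases_zero]

lemma F_mid (x : Fin (N + 1) → ℝ) (i : Fin N) :
    F x (Fin.castSucc i).succ = Set.Ioo (x i.castSucc) (x i.succ) := by
  unfold F; rw [Fin.cases_succ, Fin.lastCases_castSucc]

lemma F_last (x : Fin (N + 1) → ℝ) :
    F x (Fin.last N).succ = Set.Ioi (x (Fin.last N)) := by
  unfold F; rw [Fin.cases_succ, Fin.lastCases_last]

lemma B_zero (x : Fin (N + 1) → ℝ) : B x 0 = Set.Iic (x 0) := by
  unfold B; rw [Fin.cases_zero]

lemma B_mid (x : Fin (N + 1) → ℝ) (i : Fin N) :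
    B x (Fin.castSucc i).succ = Set.Ioc (x i.castSucc) (x i.succ) := by
  unfold B; rw [Fin.cases_succ, Fin.lastCases_castSucc]

lemma B_last (x : Fin (N + 1) → ℝ) :
    B x (Fin.last N).succ = Set.Ioi (x (Fin.last N)) := by
  unfold B; rw [Fin.cases_succ, Fin.lastCases_last]

lemma A_cases {x : Fin (N + 1) → ℝ} {P : Set ℝ → Prop} (h0 : P (Set.Iic (x 0)))
    (hs : ∀ i : Fin N, P (Set.Ioc (x i.castSucc) (x i.succ))) : ∀ α, P (A x α) := by
  intro α
  refine Fin.cases ?_ (fun i => ?_) α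
  · rw [A_zero]; exact h0
  · rw [A_succ]; exact hs i

lemma F_cases {x : Fin (N + 1) → ℝ} {P : Set ℝ → Prop} (h0 : P (Set.Iio (x 0)))
    (hl : P (Set.Ioi (x (Fin.last N))))
    (hm : ∀ i : Fin N, P (Set.Ioo (x i.castSucc) (x i.succ))) : ∀ j, P (F x j) := by
  intro j
  refine Fin.cases ?_ (fun i => ?_) j
  · rw [F_zero]; exact h0
  · refine Fin.lastCases ?_ (fun i' => ?_) i
    · rw [F_last]; exact hl
    · rw [F_mid]; exact hm i'

lemma B_cases {x : Fin (N + 1) → ℝ} {P : Set ℝ → Prop} (h0 : P (Set.Iic (x 0)))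
    (hl : P (Set.Ioi (x (Fin.last N))))
    (hm : ∀ i : Fin N, P (Set.Ioc (x i.castSucc) (x i.succ))) : ∀ j, P (B x j) := by
  intro j
  refine Fin.cases ?_ (fun i => ?_) j
  · rw [B_zero]; exact h0
  · refine Fin.lastCases ?_ (fun i' => ?_) i
    · rw [B_last]; exact hl
    · rw [B_mid]; exact hm i'

lemma A_subset_Iic (x : Fin (N + 1) → ℝ) (α : Fin (N + 1)) : A x α ⊆ Set.Iic (x α) := by
  refine Fin.cases ?_ (fun i => ?_) α
  · rw [A_zero]
  · rw [A_succ]; exact Set.Ioc_subset_Iic_self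

lemma A_succ_subset (x : Fin (N + 1) → ℝ) (i : Fin N) :
    A x i.succ ⊆ Set.Ioi (x i.castSucc) := by
  rw [A_succ]; exact Set.Ioc_subset_Ioi_self

lemma A_meas (x : Fin (N + 1) → ℝ) (α : Fin (N + 1)) : MeasurableSet (A x α) :=
  A_cases measurableSet_Iic (fun _ => measurableSet_Ioc) α

lemma A_ordConn (x : Fin (N + 1) → ℝ) (α : Fin (N + 1)) : (A x α).OrdConnected :=
  A_cases Set.ordConnected_Iic (fun _ => Set.ordConnected_Ioc) α

lemma F_meas (x : Fin (N + 1) → ℝ) (j : Fin (N + 2)) : MeasurableSet (F x j) :=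
  F_cases measurableSet_Iio measurableSet_Ioi (fun _ => measurableSet_Ioo) j

lemma F_ordConn (x : Fin (N + 1) → ℝ) (j : Fin (N + 2)) : (F x j).OrdConnected :=
  F_cases Set.ordConnected_Iio Set.ordConnected_Ioi (fun _ => Set.ordConnected_Ioo) j

lemma B_meas (x : Fin (N + 1) → ℝ) (j : Fin (N + 2)) : MeasurableSet (B x j) :=
  B_cases measurableSet_Iic measurableSet_Ioi (fun _ => measurableSet_Ioc) j

lemma B_succ_subset (x : Fin (N + 1) → ℝ) (i : Fin (N + 1)) :
    B x i.succ ⊆ Set.Ioi (x i) := by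
  refine Fin.lastCases ?_ (fun i' => ?_) i
  · rw [B_last]
  · rw [B_mid]; exact Set.Ioc_subset_Ioi_self

lemma B_disj (x : Fin (N + 1) → ℝ) (hx : StrictMono x) :
    Pairwise (Function.onFun Disjoint (B x)) := by
  have key : ∀ j k : Fin (N + 2), j < k → Disjoint (B x j) (B x k) := by
    intro j k hlt
    obtain ⟨k', rfl⟩ := Fin.eq_succ_of_ne_zero
      (Fin.pos_iff_ne_zero.mp (lt_of_le_of_lt (Fin.zero_le j) hlt))
    rcases Fin.eq_zero_or_eq_succ j with rfl | ⟨j', rfl⟩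
    · refine (Set.Iic_disjoint_Ioi (hx.monotone (Fin.zero_le k'))).mono ?_ (B_succ_subset x k')
      rw [B_zero]
    · have hj'k' : j' < k' := by
        simpa using hlt
      have hj'ne : j' ≠ Fin.last N := by
        intro h
        exact absurd hj'k' (by simp [h, not_lt, Fin.le_last])
      obtain ⟨j'', rfl⟩ := Fin.exists_castSucc_eq.mpr hj'ne
      have hsub : B x (Fin.castSucc j'').succ ⊆ Set.Iic (x j''.succ) := by
        rw [B_mid]
        exact Set.Ioc_subset_Iic_self
      have hle : x j''.succ ≤ x k' := hx.monotone (Fin.castSucc_lt_iff_succ_le.mp hj'k')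
      exact (Set.Iic_disjoint_Ioi hle).mono hsub (B_succ_subset x k')
  intro j k hne
  rcases hne.lt_or_gt with h | h
  · exact key _ _ h
  · exact (key _ _ h).symm

lemma prod_disj (x : Fin (N + 1) → ℝ) (hx : StrictMono x) :
    Pairwise (Function.onFun Disjoint fun α => A x α ×ˢ Set.Ioi (x α)) := by
  have key : ∀ α β : Fin (N + 1), α < β →
      Disjoint (A x α ×ˢ Set.Ioi (x α)) (A x β ×ˢ Set.Ioi (x β)) := by
    intro α β hlt
    obtain ⟨j, rfl⟩ := Fin.eq_succ_of_ne_zero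
      (Fin.pos_iff_ne_zero.mp (lt_of_le_of_lt (Fin.zero_le α) hlt))
    refine Disjoint.set_prod_left ?_ _ _
    have hle : x α ≤ x j.castSucc := hx.monotone (Fin.le_castSucc_iff.mpr hlt)
    exact (Set.Iic_disjoint_Ioi hle).mono (A_subset_Iic x α) (A_succ_subset x j)
  intro α β hne
  rcases hne.lt_or_gt with h | h
  · exact key _ _ h
  · exact (key _ _ h).symm

lemma lower_subset (x : Fin (N + 1) → ℝ) :
    (⋃ α, A x α ×ˢ Set.Ioi (x α)) ⊆ {p : ℝ × ℝ | p.1 < p.2} := by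
  rintro ⟨u, v⟩ hp
  simp only [Set.mem_iUnion, Set.mem_prod, Set.mem_Ioi] at hp
  obtain ⟨α, hu, hv⟩ := hp
  exact lt_of_le_of_lt (A_subset_Iic x α hu) hv

lemma cover (x : Fin (N + 1) → ℝ) (hx : StrictMono x) :
    {p : ℝ × ℝ | p.1 < p.2} ⊆ (⋃ α, A x α ×ˢ Set.Ioi (x α)) ∪ ⋃ j, F x j ×ˢ B x j := by
  classical
  rintro ⟨u, v⟩ (huv : u < v)
  by_cases hex : ∃ α : Fin (N + 1), u ≤ x α ∧ x α < v
  · left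
    set s : Finset (Fin (N + 1)) := Finset.univ.filter fun α => u ≤ x α ∧ x α < v with hs
    have hsne : s.Nonempty := by
      obtain ⟨α, hα⟩ := hex
      exact ⟨α, by simp [hs, hα.1, hα.2]⟩
    have hmem : u ≤ x (s.min' hsne) ∧ x (s.min' hsne) < v := by
      have := s.min'_mem hsne
      simp only [hs, Finset.mem_filter, Finset.mem_univ, true_and] at this
      exact this
    have hmin : ∀ β : Fin (N + 1), u ≤ x β → x β < v → s.min' hsne ≤ β := by
      intro β h1 h2
      exact s.min'_le β (by simp [hs, h1, h2])
    refine Set.mem_iUnion.mpr ⟨s.min' hsne, Set.mem_prod.mpr ⟨?_, hmem.2⟩⟩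
    rcases Fin.eq_zero_or_eq_succ (s.min' hsne) with h0 | ⟨j, hj⟩
    · rw [h0] at hmem ⊢
      rw [A_zero]
      exact hmem.1
    · rw [hj] at hmem ⊢
      rw [A_succ]
      refine ⟨?_, hmem.1⟩
      by_contra hle
      push_neg at hle
      have hlt2 : x j.castSucc < v := lt_trans (hx ((Fin.castSucc_lt_succ (i := j)))) hmem.2
      have := hmin j.castSucc hle hlt2
      rw [hj] at this
      exact absurd this (not_le.mpr ((Fin.castSucc_lt_succ (i := j))))
  · right
    push_neg at hex
    by_cases h0 : u ≤ x 0
    · refine Set.mem_iUnion.mpr ⟨0, Set.mem_prod.mpr ⟨?_, ?_⟩⟩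
      · rw [F_zero]
        exact lt_of_lt_of_le huv (hex 0 h0)
      · rw [B_zero]
        exact hex 0 h0
    · push_neg at h0
      by_cases hl : u ≤ x (Fin.last N)
      · set s : Finset (Fin (N + 1)) := Finset.univ.filter fun α => u ≤ x α with hs
        have hsne : s.Nonempty := ⟨Fin.last N, by simp [hs, hl]⟩
        have hmem : u ≤ x (s.min' hsne) := by
          have := s.min'_mem hsne
          simp only [hs, Finset.mem_filter, Finset.mem_univ, true_and] at this
          exact this
        have hmin : ∀ β : Fin (N + 1), u ≤ x β → s.min' hsne ≤ β := by
          intro β h1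
          exact s.min'_le β (by simp [hs, h1])
        rcases Fin.eq_zero_or_eq_succ (s.min' hsne) with hz | ⟨j, hj⟩
        · rw [hz] at hmem
          exact absurd hmem (not_le.mpr h0)
        · have hju : u ≤ x j.succ := by rw [hj] at hmem; exact hmem
          have hcs : x j.castSucc < u := by
            by_contra hle
            push_neg at hle
            have := hmin j.castSucc hle
            rw [hj] at this
            exact absurd this (not_le.mpr ((Fin.castSucc_lt_succ (i := j))))
          have hvj : v ≤ x j.succ := hex j.succ hju
          have hult : u < x j.succ := lt_of_le_of_ne hju (by
            rintro rfl
            exact absurd hvj (not_le.mpr huv))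
          refine Set.mem_iUnion.mpr ⟨(Fin.castSucc j).succ, Set.mem_prod.mpr ⟨?_, ?_⟩⟩
          · rw [F_mid]
            exact ⟨hcs, hult⟩
          · rw [B_mid]
            exact ⟨lt_trans hcs huv, hvj⟩
      · push_neg at hl
        refine Set.mem_iUnion.mpr ⟨(Fin.last N).succ, Set.mem_prod.mpr ⟨?_, ?_⟩⟩
        · rw [F_last]
          exact hl
        · rw [B_last]
          exact lt_trans hl huv

lemma lower_bound (x : Fin (N + 1) → ℝ) (hx : StrictMono x) (μ ρ : Measure ℝ) [SigmaFinite ρ] :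
    ∑ α : Fin (N + 1), μ (A x α) * ρ (Set.Ioi (x α)) ≤ (μ.prod ρ) {p : ℝ × ℝ | p.1 < p.2} := by
  have h1 : (μ.prod ρ) (⋃ α, A x α ×ˢ Set.Ioi (x α)) =
      ∑' α, (μ.prod ρ) (A x α ×ˢ Set.Ioi (x α)) :=
    measure_iUnion (prod_disj x hx) fun α => (A_meas x α).prod measurableSet_Ioi
  calc ∑ α : Fin (N + 1), μ (A x α) * ρ (Set.Ioi (x α))
      = ∑' α, (μ.prod ρ) (A x α ×ˢ Set.Ioi (x α)) := by
        rw [tsum_fintype]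
        exact Finset.sum_congr rfl fun α _ => (Measure.prod_prod _ _).symm
    _ = (μ.prod ρ) (⋃ α, A x α ×ˢ Set.Ioi (x α)) := h1.symm
    _ ≤ (μ.prod ρ) {p : ℝ × ℝ | p.1 < p.2} := measure_mono (lower_subset x)

lemma upper_bound (x : Fin (N + 1) → ℝ) (hx : StrictMono x) (μ ρ : Measure ℝ) [SigmaFinite ρ]
    (ε M' : ENNReal) (hF : ∀ j, μ (F x j) ≤ ε) (hρ : ρ Set.univ ≤ M') :
    (μ.prod ρ) {p : ℝ × ℝ | p.1 < p.2} ≤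
      (∑ α : Fin (N + 1), μ (A x α) * ρ (Set.Ioi (x α))) + ε * M' := by
  have hU : (μ.prod ρ) (⋃ α, A x α ×ˢ Set.Ioi (x α)) ≤
      ∑ α : Fin (N + 1), μ (A x α) * ρ (Set.Ioi (x α)) := by
    refine le_trans (measure_iUnion_le _) ?_
    rw [tsum_fintype]
    exact le_of_eq (Finset.sum_congr rfl fun α _ => Measure.prod_prod _ _)
  have hE : (μ.prod ρ) (⋃ j, F x j ×ˢ B x j) ≤ ε * M' := by
    calc (μ.prod ρ) (⋃ j, F x j ×ˢ B x j) ≤ ∑' j, (μ.prod ρ) (F x j ×ˢ B x j) :=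
          measure_iUnion_le _
      _ = ∑ j : Fin (N + 2), μ (F x j) * ρ (B x j) := by
          rw [tsum_fintype]
          exact Finset.sum_congr rfl fun j _ => Measure.prod_prod _ _
      _ ≤ ∑ j : Fin (N + 2), ε * ρ (B x j) :=
          Finset.sum_le_sum fun j _ => mul_le_mul_left (hF j) _
      _ = ε * ∑ j : Fin (N + 2), ρ (B x j) := by rw [Finset.mul_sum]
      _ ≤ ε * M' := by
          refine mul_le_mul_right ?_ ε
          have hB : ∑ j : Fin (N + 2), ρ (B x j) = ρ (⋃ j, B x j) := by
            rw [measure_iUnion (B_disj x hx) (B_meas x), tsum_fintype]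
          rw [hB]
          exact le_trans (measure_mono (Set.subset_univ _)) hρ
  calc (μ.prod ρ) {p : ℝ × ℝ | p.1 < p.2}
      ≤ (μ.prod ρ) ((⋃ α, A x α ×ˢ Set.Ioi (x α)) ∪ ⋃ j, F x j ×ˢ B x j) :=
        measure_mono (cover x hx)
    _ ≤ (μ.prod ρ) (⋃ α, A x α ×ˢ Set.Ioi (x α)) + (μ.prod ρ) (⋃ j, F x j ×ˢ B x j) :=
        measure_union_le _ _
    _ ≤ _ := add_le_add hU hE

end Stmt6Aux

theorem stmt_6 (σ τ : Measure ℝ) [IsFiniteMeasure σ] [IsFiniteMeasure τ]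
    (σν τν : ℕ → Measure ℝ)
    (M : NNReal)
    (hbound : ∀ ν, σν ν Set.univ ≤ M ∧ τν ν Set.univ ≤ M)
    (hσ : ∀ I : Set ℝ, I.OrdConnected → MeasurableSet I →
      Tendsto (fun ν => σν ν I) atTop (nhds (σ I)))
    (hτ : ∀ I : Set ℝ, I.OrdConnected → MeasurableSet I →
      Tendsto (fun ν => τν ν I) atTop (nhds (τ I)))
    (hpart : ∀ ε : ENNReal, 0 < ε → ∃ (N : ℕ) (x : Fin (N + 1) → ℝ), StrictMono x ∧
      σ (Set.Iio (x 0)) ≤ ε ∧ τ (Set.Iio (x 0)) ≤ ε ∧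
      σ (Set.Ioi (x (Fin.last N))) ≤ ε ∧ τ (Set.Ioi (x (Fin.last N))) ≤ ε ∧
      ∀ i : Fin N, σ (Set.Ioo (x i.castSucc) (x i.succ)) ≤ ε ∧
        τ (Set.Ioo (x i.castSucc) (x i.succ)) ≤ ε) :
    Tendsto (fun ν => (σν ν).prod (τν ν) {p : ℝ × ℝ | p.1 < p.2}) atTop
      (nhds (σ.prod τ {p : ℝ × ℝ | p.1 < p.2})) := by
  classical
  have hfτ : ∀ n, IsFiniteMeasure (τν n) :=
    fun n => ⟨lt_of_le_of_lt (hbound n).2 ENNReal.coe_lt_top⟩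
  have hτM : τ Set.univ ≤ M :=
    le_of_tendsto (hτ _ Set.ordConnected_univ MeasurableSet.univ)
      (Eventually.of_forall fun n => (hbound n).2)
  have haK : σ.prod τ {p : ℝ × ℝ | p.1 < p.2} ≠ ⊤ := measure_ne_top _ _
  rw [ENNReal.tendsto_nhds haK]
  intro ε' hε'
  set a := σ.prod τ {p : ℝ × ℝ | p.1 < p.2} with ha
  set ε'' := min ε' 1 with hε''def
  have hε''0 : ε'' ≠ 0 := (lt_min hε' zero_lt_one).ne'
  have hε''top : ε'' ≠ ⊤ := ne_top_of_le_ne_top ENNReal.one_ne_top (min_le_right _ _)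
  have h2top : ε'' / 2 ≠ ⊤ := (ENNReal.div_lt_top hε''top two_ne_zero).ne
  suffices h : ∀ᶠ n in atTop,
      (σν n).prod (τν n) {p : ℝ × ℝ | p.1 < p.2} ∈ Set.Icc (a - ε'') (a + ε'') by
    refine h.mono fun n hn => ⟨le_trans (tsub_le_tsub_left (min_le_left _ _) a) hn.1,
      le_trans hn.2 (add_le_add_right (min_le_left _ _) a)⟩
  set ε := ε'' / (8 * ((M : ENNReal) + 1)) with hεdef
  have h8 : (8 : ENNReal) * ((M : ENNReal) + 1) ≠ 0 := by
    simp
  have h8t : (8 : ENNReal) * ((M : ENNReal) + 1) ≠ ⊤ := by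
    refine ENNReal.mul_ne_top (by norm_num) ?_
    exact ENNReal.add_ne_top.mpr ⟨ENNReal.coe_ne_top, ENNReal.one_ne_top⟩
  have hεpos : 0 < ε := ENNReal.div_pos hε''0 h8t
  have hεtop : ε ≠ ⊤ := (ENNReal.div_lt_top hε''top h8).ne
  have hεmul : ε * (8 * ((M : ENNReal) + 1)) = ε'' := ENNReal.div_mul_cancel h8 h8t
  obtain ⟨N, x, hx, hσ0, hτ0, hσl, hτl, hmid⟩ := hpart ε hεpos
  have hFσ : ∀ j, σ (Stmt6Aux.F x j) ≤ ε :=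
    Stmt6Aux.F_cases (P := fun s => σ s ≤ ε) hσ0 hσl fun i => (hmid i).1
  set S := ∑ α : Fin (N + 1), σ (Stmt6Aux.A x α) * τ (Set.Ioi (x α)) with hSdef
  have hS_tendsto : Tendsto
      (fun n => ∑ α : Fin (N + 1), σν n (Stmt6Aux.A x α) * τν n (Set.Ioi (x α)))
      atTop (nhds S) := by
    refine tendsto_finset_sum _ fun α _ => ENNReal.Tendsto.mul
      (hσ _ (Stmt6Aux.A_ordConn x α) (Stmt6Aux.A_meas x α)) (Or.inr (measure_ne_top τ _))
      (hτ _ Set.ordConnected_Ioi measurableSet_Ioi) (Or.inr (measure_ne_top σ _))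
  have hS_le : S ≤ a := Stmt6Aux.lower_bound x hx σ τ
  have hS_ne : S ≠ ⊤ := ne_top_of_le_ne_top haK hS_le
  have hhalf : (0 : ENNReal) < ε'' / 2 := ENNReal.half_pos hε''0
  have hSν := (ENNReal.tendsto_nhds hS_ne).mp hS_tendsto (ε'' / 2) hhalf
  have hεlt : ε < 2 * ε := by
    rw [two_mul]
    exact ENNReal.lt_add_right hεtop hεpos.ne'
  have hFν : ∀ᶠ n in atTop, ∀ j, σν n (Stmt6Aux.F x j) ≤ 2 * ε := by
    rw [eventually_all]
    intro j
    have hlt : σ (Stmt6Aux.F x j) < 2 * ε := lt_of_le_of_lt (hFσ j) hεlt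
    exact ((hσ _ (Stmt6Aux.F_ordConn x j) (Stmt6Aux.F_meas x j)).eventually_lt_const hlt).mono
      fun n h => h.le
  have hεM2 : 2 * ε * (M : ENNReal) ≤ ε'' / 2 := by
    rw [ENNReal.le_div_iff_mul_le (Or.inl two_ne_zero) (Or.inl ENNReal.ofNat_ne_top)]
    calc 2 * ε * (M : ENNReal) * 2 = ε * (4 * (M : ENNReal)) := by ring
      _ ≤ ε * (8 * ((M : ENNReal) + 1)) :=
          mul_le_mul_right (mul_le_mul' (by norm_num) le_self_add) ε
      _ = ε'' := hεmul
  have hεM1 : ε * (M : ENNReal) ≤ ε'' / 2 := by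
    refine le_trans ?_ hεM2
    rw [show (2 : ENNReal) * ε * (M : ENNReal) = ε * (M : ENNReal) + ε * (M : ENNReal) by ring]
    exact le_self_add
  have hupper : a ≤ S + ε'' / 2 :=
    le_trans (Stmt6Aux.upper_bound x hx σ τ ε M hFσ hτM) (add_le_add_right hεM1 S)
  have hsub : (S + ε'' / 2) - ε'' = S - ε'' / 2 := by
    have hkey : S + ε'' / 2 - (ε'' / 2 + ε'' / 2) = S - ε'' / 2 := by
      rw [← tsub_tsub, ENNReal.add_sub_cancel_right h2top]
    rwa [ENNReal.add_halves] at hkey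
  filter_upwards [hSν, hFν] with n hIcc hFn
  haveI := hfτ n
  have hlow : S - ε'' / 2 ≤ (σν n).prod (τν n) {p : ℝ × ℝ | p.1 < p.2} :=
    le_trans hIcc.1 (Stmt6Aux.lower_bound x hx (σν n) (τν n))
  constructor
  · have h1 : a - ε'' ≤ S - ε'' / 2 := by
      calc a - ε'' ≤ (S + ε'' / 2) - ε'' := tsub_le_tsub_right hupper _
        _ = S - ε'' / 2 := hsub
    exact le_trans h1 hlow
  · have h3 : (σν n).prod (τν n) {p : ℝ × ℝ | p.1 < p.2} ≤
        (∑ α : Fin (N + 1), σν n (Stmt6Aux.A x α) * τν n (Set.Ioi (x α))) +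
          2 * ε * (M : ENNReal) :=
      Stmt6Aux.upper_bound x hx (σν n) (τν n) (2 * ε) M hFn (hbound n).2
    calc (σν n).prod (τν n) {p : ℝ × ℝ | p.1 < p.2}
        ≤ (∑ α : Fin (N + 1), σν n (Stmt6Aux.A x α) * τν n (Set.Ioi (x α))) +
            2 * ε * (M : ENNReal) := h3
      _ ≤ (S + ε'' / 2) + ε'' / 2 := add_le_add hIcc.2 hεM2
      _ = S + ε'' := by rw [add_assoc, ENNReal.add_halves]
      _ ≤ a + ε'' := add_le_add_left hS_le _
end

section
/- Let E : Ω × Ω → ℝⁿ be a C¹ map on an open set Ω ⊆ ℝⁿ satisfying E(u,u) = 0 for all u, with i-th component E_i, and let l_i : Ω → ℝⁿ be a Lipschitz map such that the first-order Taylor expansion |E_i(u, ũ) − l_i(u)·(ũ − u)| ≤ C|u − ũ|² holds for all u, ũ in a compact convex K ⊆ Ω. Let u : ℝ → K be right continuous of bounded variation with distributional derivative μ = μ_c + μ_a (continuous plus atomic part), and define the signed measure μ_i(B) = ∫_B l_i(u) dμ_c + Σ_{x ∈ B} E_i(u(x−), u(x+)). Then there exists C' > 0 (depending only on C and the Lipschitz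 constants) such that for all a < b: |E_i(u(a+), u(b−)) − μ_i((a,b))| ≤ C' · diam(u((a,b))) · |μ|((a,b)). -/
open Filter Set MeasureTheory Topology

/-- A right-continuous function into a metrizable space is measurable. -/
lemma aux_meas {n : ℕ} (u : ℝ → Fin n → ℝ)
    (hrc : ∀ x : ℝ, Tendsto u (nhdsWithin x (Set.Ioi x)) (nhds (u x))) : Measurable u := by
  have hIci : ∀ x : ℝ, Tendsto u (nhdsWithin x (Set.Ici x)) (nhds (u x)) := by
    intro x
    rw [show Set.Ici x = insert x (Set.Ioi x) from Set.Ioi_insert.symm, nhdsWithin_insert]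
    exact tendsto_sup.2 ⟨tendsto_pure_nhds u x, hrc x⟩
  set v : ℕ → ℝ → Fin n → ℝ := fun m x => u ((⌈(m + 1 : ℝ) * x⌉ : ℤ) / (m + 1)) with hv
  have hvm : ∀ m, Measurable (v m) := by
    intro m
    have h1 : Measurable fun x : ℝ => (⌈(m + 1 : ℝ) * x⌉ : ℤ) :=
      Int.measurable_ceil.comp (measurable_const_mul _)
    exact (measurable_from_top (f := fun z : ℤ => u ((z : ℝ) / (m + 1)))).comp h1
  have hlim : ∀ x : ℝ, Tendsto (fun m => v m x) atTop (nhds (u x)) := by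
    intro x
    refine (hIci x).comp ?_
    rw [tendsto_nhdsWithin_iff]
    constructor
    · have h2 : Tendsto (fun m : ℕ => x + 1 / (m + 1 : ℝ)) atTop (𝓝 (x + 0)) :=
        tendsto_const_nhds.add (tendsto_one_div_add_atTop_nhds_zero_nat)
      rw [add_zero] at h2
      refine tendsto_of_tendsto_of_tendsto_of_le_of_le tendsto_const_nhds h2 ?_ ?_
      · intro m
        have hm : (0:ℝ) < m + 1 := by positivity
        rw [le_div_iff₀ hm, mul_comm]
        exact Int.le_ceil _
      · intro m
        have hm : (0:ℝ) < m + 1 := by positivity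
        rw [div_le_iff₀ hm]
        have h3 := Int.ceil_lt_add_one ((m + 1 : ℝ) * x)
        have h4 : (x + 1 / (↑m + 1)) * ((m:ℝ) + 1) = ((m:ℝ) + 1) * x + 1 := by
          field_simp
        rw [h4]
        linarith
    · refine Eventually.of_forall fun m => ?_
      have hm : (0:ℝ) < m + 1 := by positivity
      rw [Set.mem_Ici, le_div_iff₀ hm, mul_comm]
      exact Int.le_ceil _
  exact measurable_of_tendsto_metrizable' atTop hvm (tendsto_pi_nhds.2 hlim)

lemma sm_apply (s : MeasureTheory.SignedMeasure ℝ) {i : Set ℝ} (hi : MeasurableSet i) :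
    s i = (s.toJordanDecomposition.posPart i).toReal -
      (s.toJordanDecomposition.negPart i).toReal := by
  conv_lhs => rw [← s.toSignedMeasure_toJordanDecomposition]
  rw [JordanDecomposition.toSignedMeasure, VectorMeasure.sub_apply,
    Measure.toSignedMeasure_apply_measurable hi, Measure.toSignedMeasure_apply_measurable hi]
  rfl

/-- Integral of a real function against a signed measure, via the Jordan decomposition. -/
noncomputable def sIntegral (s : MeasureTheory.SignedMeasure ℝ) (f : ℝ → ℝ) (B : Set ℝ) : ℝ :=
  (∫ x in B, f x ∂s.toJordanDecomposition.posPart) -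
    ∫ x in B, f x ∂s.toJordanDecomposition.negPart

/-- The `i`-th wave measure of a BV function `u`: the continuous part of its derivative
integrated against the left eigenvector `l`, plus the atomic contributions of the wave
strengths `E` of the Riemann problems at the jump points `J j`. -/
noncomputable def waveMeasure {n : ℕ} (E : (Fin n → ℝ) → (Fin n → ℝ) → ℝ)
    (l : (Fin n → ℝ) → Fin n → ℝ) (u uL : ℝ → Fin n → ℝ)
    (μc : Fin n → MeasureTheory.SignedMeasure ℝ) (J : ℕ → ℝ) (B : Set ℝ) : ℝ :=
  (∑ k : Fin n, sIntegral (μc k) (fun x => l (u x) k) B) +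
    ∑' j : ℕ, B.indicator (fun x => E (uL x) (u x)) (J j)

/-- The total variation measure `|μ|` of the derivative of `u`: total variation of the
continuous part plus the Dirac masses carried by the jumps. -/
noncomputable def totalVarMeasure {n : ℕ} (u uL : ℝ → Fin n → ℝ)
    (μc : Fin n → MeasureTheory.SignedMeasure ℝ) (J : ℕ → ℝ) : Measure ℝ :=
  (∑ k : Fin n, (μc k).totalVariation) +
    Measure.sum (fun j : ℕ => (‖u (J j) - uL (J j)‖₊ : ENNReal) • Measure.dirac (J j))

set_option maxHeartbeats 1000000 in
theorem stmt_8 {n : ℕ} (K : Set (Fin n → ℝ)) (hKc : IsCompact K) (hKconv : Convex ℝ K)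
    (E : (Fin n → ℝ) → (Fin n → ℝ) → ℝ) (l : (Fin n → ℝ) → Fin n → ℝ)
    (C : ℝ) (hC : 0 < C) (L : NNReal)
    (hE0 : ∀ v ∈ K, E v v = 0)
    (hTaylor : ∀ v ∈ K, ∀ w ∈ K, |E v w - ∑ k, l v k * (w k - v k)| ≤ C * ‖w - v‖ ^ 2)
    (hl : LipschitzOnWith L l K)
    (u uL : ℝ → Fin n → ℝ) (hu : ∀ x, u x ∈ K)
    (hrc : ∀ x : ℝ, Tendsto u (nhdsWithin x (Set.Ioi x)) (nhds (u x)))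
    (hlc : ∀ x : ℝ, Tendsto u (nhdsWithin x (Set.Iio x)) (nhds (uL x)))
    (μc : Fin n → MeasureTheory.SignedMeasure ℝ) (J : ℕ → ℝ)
    (hJ : ∀ x : ℝ, x ∉ Set.range J → uL x = u x)
    (hcont : ∀ (k : Fin n) (x : ℝ), μc k {x} = 0)
    (hderiv : ∀ a b : ℝ, a ≤ b → ∀ k : Fin n,
      u b k - u a k = μc k (Set.Ioc a b) +
        ∑' j : ℕ, (Set.Ioc a b).indicator (fun x => u x k - uL x k) (J j))
    (hBV : totalVarMeasure u uL μc J Set.univ ≠ ⊤) :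
    ∃ C' > (0 : ℝ), ∀ a b : ℝ, a < b →
      |E (u a) (uL b) - waveMeasure E l u uL μc J (Set.Ioo a b)| ≤
        C' * Metric.diam (u '' Set.Ioo a b) *
          (totalVarMeasure u uL μc J (Set.Ioo a b)).toReal := by
  classical
  obtain ⟨R, hR⟩ := hKc.exists_bound_of_continuousOn hl.continuousOn
  have humeas : Measurable u := aux_meas u hrc
  have hC'pos : (0:ℝ) < 2 * C + ((n : ℝ) + 1) * L + 1 := by
    have h1 : (0:ℝ) ≤ ((n : ℝ) + 1) * L := by
      have := L.coe_nonneg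
      have : (0:ℝ) ≤ (n:ℝ) + 1 := by positivity
      exact mul_nonneg this L.coe_nonneg
    linarith
  refine ⟨2 * C + ((n : ℝ) + 1) * L + 1, hC'pos, ?_⟩
  intro a b hab
  set S : Set ℝ := Set.Ioo a b with hSdef
  have hSm : MeasurableSet S := measurableSet_Ioo
  set D : ℝ := Metric.diam (u '' S) with hDdef
  have hD0 : 0 ≤ D := Metric.diam_nonneg
  -- closure facts
  have himg : u '' S ⊆ K := by rintro _ ⟨x, _, rfl⟩; exact hu x
  have hclK : closure (u '' S) ⊆ K := closure_minimal himg hKc.isClosed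
  have hbd : Bornology.IsBounded (u '' S) := hKc.isBounded.subset himg
  have hdist : ∀ p ∈ closure (u '' S), ∀ q ∈ closure (u '' S), dist p q ≤ D := by
    intro p hp q hq
    rw [hDdef, ← Metric.diam_closure]
    exact Metric.dist_le_diam_of_mem hbd.closure hp hq
  have hua_cl : u a ∈ closure (u '' S) := by
    refine mem_closure_of_tendsto (hrc a) ?_
    filter_upwards [Ioo_mem_nhdsGT_of_mem ⟨le_refl a, hab⟩] with x hx
    exact Set.mem_image_of_mem u hx
  have huL_cl : ∀ x ∈ Set.Ioc a b, uL x ∈ closure (u '' S) := by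
    intro x hx
    refine mem_closure_of_tendsto (hlc x) ?_
    filter_upwards [Ioo_mem_nhdsLT_of_mem ⟨hx.1, le_refl x⟩] with y hy
    exact Set.mem_image_of_mem u ⟨hy.1, lt_of_lt_of_le hy.2 hx.2⟩
  have huLb_cl : uL b ∈ closure (u '' S) := huL_cl b ⟨hab, le_refl b⟩
  have huLbK : uL b ∈ K := hclK huLb_cl
  have hux_cl : ∀ x ∈ S, u x ∈ closure (u '' S) := fun x hx =>
    subset_closure (Set.mem_image_of_mem u hx)
  have huLx_cl : ∀ x ∈ S, uL x ∈ closure (u '' S) := fun x hx =>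
    huL_cl x ⟨hx.1, hx.2.le⟩
  -- measures
  set P : Fin n → Measure ℝ := fun k => (μc k).toJordanDecomposition.posPart with hPdef
  set N : Fin n → Measure ℝ := fun k => (μc k).toJordanDecomposition.negPart with hNdef
  have hPfin : ∀ k (i : Set ℝ), P k i ≠ ⊤ := fun k i => measure_ne_top _ _
  have hNfin : ∀ k (i : Set ℝ), N k i ≠ ⊤ := fun k i => measure_ne_top _ _
  have htv0 : ∀ k, (μc k).totalVariation = P k + N k := fun k => rfl
  have htv : ∀ k (i : Set ℝ), (μc k).totalVariation i = P k i + N k i := fun k i => by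
    rw [htv0 k, Measure.add_apply]
  set mC : Fin n → ℝ := fun k => ((μc k).totalVariation S).toReal with hmCdef
  have hmC : ∀ k, mC k = (P k S).toReal + (N k S).toReal := by
    intro k
    rw [hmCdef]
    simp only
    rw [htv k S, ENNReal.toReal_add (hPfin k S) (hNfin k S)]
  have hmC0 : ∀ k, 0 ≤ mC k := fun k => ENNReal.toReal_nonneg
  -- the jump measure
  set νJ : Measure ℝ :=
    Measure.sum (fun j : ℕ => (‖u (J j) - uL (J j)‖₊ : ENNReal) • Measure.dirac (J j)) with hνJdef
  have hν_eq : ∀ i : Set ℝ, totalVarMeasure u uL μc J i =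
      (∑ k : Fin n, (μc k).totalVariation) i + νJ i := by
    intro i
    have : totalVarMeasure u uL μc J = (∑ k : Fin n, (μc k).totalVariation) + νJ := rfl
    rw [this, Measure.add_apply]
  have hνJuniv : νJ Set.univ ≠ ⊤ := by
    intro h
    exact hBV (by rw [hν_eq Set.univ, h, add_top])
  have hνJS : νJ S ≠ ⊤ := ne_top_of_le_ne_top hνJuniv (measure_mono (Set.subset_univ S))
  have hνJapply : ∀ i : Set ℝ, MeasurableSet i →
      νJ i = ∑' j, i.indicator (fun x => (‖u x - uL x‖₊ : ENNReal)) (J j) := by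
    intro i hi
    rw [hνJdef, Measure.sum_apply _ hi]
    refine tsum_congr fun j => ?_
    rw [Measure.smul_apply, Measure.dirac_apply' _ hi, smul_eq_mul]
    by_cases hj : J j ∈ i
    · rw [Set.indicator_of_mem hj, Set.indicator_of_mem hj, Pi.one_apply, mul_one]
    · rw [Set.indicator_of_notMem hj, Set.indicator_of_notMem hj, mul_zero]
  set g : ℕ → ℝ := fun j => S.indicator (fun x => ‖u x - uL x‖) (J j) with hgdef
  have hg_eq : ∀ j, g j = (S.indicator (fun x => (‖u x - uL x‖₊ : ENNReal)) (J j)).toReal := by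
    intro j; by_cases hj : J j ∈ S <;> simp [hgdef, hj]
  have hg0 : ∀ j, 0 ≤ g j := by
    intro j; by_cases hj : J j ∈ S <;> simp [hgdef, hj, norm_nonneg]
  have hgsum : Summable g := by
    refine (summable_congr hg_eq).2 (ENNReal.summable_toReal ?_)
    rw [← hνJapply S hSm]; exact hνJS
  set mJ : ℝ := (νJ S).toReal with hmJdef
  have hmJ0 : 0 ≤ mJ := ENNReal.toReal_nonneg
  have hgtsum : ∑' j, g j = mJ := by
    have h1 : ∀ j, (S.indicator (fun x => (‖u x - uL x‖₊ : ENNReal)) (J j)) ≠ ⊤ := by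
      intro j; by_cases hj : J j ∈ S <;> simp [hj]
    rw [hmJdef, hνJapply S hSm, ENNReal.tsum_toReal_eq h1]
    exact tsum_congr hg_eq
  -- the full variation
  set M : ℝ := (totalVarMeasure u uL μc J S).toReal with hMdef
  have hM0 : 0 ≤ M := ENNReal.toReal_nonneg
  have htvS_fin : (∑ k : Fin n, (μc k).totalVariation) S ≠ ⊤ := by
    rw [Measure.finset_sum_apply]
    refine (ENNReal.sum_lt_top.2 fun k _ => ?_).ne
    rw [htv k S]
    exact (ENNReal.add_lt_top.2 ⟨(hPfin k S).lt_top, (hNfin k S).lt_top⟩)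
  have hMsplit : M = (∑ k, mC k) + mJ := by
    rw [hMdef, hν_eq S, ENNReal.toReal_add htvS_fin hνJS, Measure.finset_sum_apply,
      ENNReal.toReal_sum (fun k _ => by rw [htv k S]; exact
        (ENNReal.add_lt_top.2 ⟨(hPfin k S).lt_top, (hNfin k S).lt_top⟩).ne)]
  have hmJ_le : mJ ≤ M := by
    rw [hMsplit]
    have : 0 ≤ ∑ k, mC k := Finset.sum_nonneg fun k _ => hmC0 k
    linarith
  have hmCsum_le : ∑ k, mC k ≤ M := by rw [hMsplit]; linarith
  have hmC_le : ∀ k, mC k ≤ M := fun k =>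
    le_trans (Finset.single_le_sum (fun k _ => hmC0 k) (Finset.mem_univ k)) hmCsum_le
  -- componentwise jump sums
  set T : Fin n → ℝ := fun k => ∑' j, S.indicator (fun x => u x k - uL x k) (J j) with hTdef
  have hTb : ∀ (k : Fin n) (j : ℕ),
      ‖S.indicator (fun x => u x k - uL x k) (J j)‖ ≤ g j := by
    intro k j
    by_cases hj : J j ∈ S
    · rw [Set.indicator_of_mem hj, hgdef]
      simp only [Set.indicator_of_mem hj]
      have h1 := norm_le_pi_norm (u (J j) - uL (J j)) k
      simpa using h1
    · simp [Set.indicator_of_notMem hj, hg0 j]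
  have hTsum : ∀ k, Summable (fun j => S.indicator (fun x => u x k - uL x k) (J j)) :=
    fun k => Summable.of_norm_bounded hgsum (hTb k)
  have hTle : ∀ k, |T k| ≤ mJ := by
    intro k
    rw [← hgtsum, ← Real.norm_eq_abs]
    exact tsum_of_norm_bounded hgsum.hasSum (hTb k)
  -- the identity (†)
  have hId : ∀ k, uL b k - u a k = μc k S + T k := by
    intro k
    set bs : ℕ → ℝ := fun m => b - (b - a) / (m + 2) with hbsdef
    have hba : 0 < b - a := sub_pos.2 hab
    have hm2 : ∀ m : ℕ, (0:ℝ) < (m:ℝ) + 2 := fun m => by positivity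
    have hbs1 : ∀ m, a < bs m := by
      intro m
      have h2 : (b - a) / ((m:ℝ) + 2) < b - a := by
        refine div_lt_self hba ?_
        have : (0:ℝ) ≤ (m:ℝ) := Nat.cast_nonneg m
        linarith
      simp only [hbsdef]
      linarith
    have hbs2 : ∀ m, bs m < b := by
      intro m
      have h2 : 0 < (b - a) / ((m:ℝ) + 2) := div_pos hba (hm2 m)
      simp only [hbsdef]
      linarith
    have hbsmono : Monotone bs := by
      intro m m' hmm
      simp only [hbsdef]
      have h2 : (b - a) / ((m':ℝ) + 2) ≤ (b - a) / ((m:ℝ) + 2) := by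
        apply div_le_div_of_nonneg_left hba.le (hm2 m)
        have : (m:ℝ) ≤ (m':ℝ) := Nat.cast_le.2 hmm
        linarith
      linarith
    have hbstend : Tendsto bs atTop (𝓝 b) := by
      have h1 : Tendsto (fun m : ℕ => ((m:ℝ) + 2)) atTop atTop :=
        tendsto_atTop_add_const_right _ 2 tendsto_natCast_atTop_atTop
      have h2 : Tendsto (fun m : ℕ => (b - a) / ((m:ℝ) + 2)) atTop (𝓝 0) :=
        Tendsto.div_atTop tendsto_const_nhds h1
      have h3 : Tendsto bs atTop (𝓝 (b - 0)) := Tendsto.sub tendsto_const_nhds h2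
      rwa [sub_zero] at h3
    have hL1 : Tendsto (fun m => u (bs m) k - u a k) atTop (𝓝 (uL b k - u a k)) := by
      have h1 : Tendsto bs atTop (nhdsWithin b (Set.Iio b)) := by
        rw [tendsto_nhdsWithin_iff]
        exact ⟨hbstend, Eventually.of_forall fun m => hbs2 m⟩
      have h2 := (hlc b).comp h1
      exact (((continuous_apply k).tendsto (uL b)).comp h2).sub tendsto_const_nhds
    have hUnion : (⋃ m, Set.Ioc a (bs m)) = S := by
      ext x
      simp only [Set.mem_iUnion, Set.mem_Ioc, hSdef, Set.mem_Ioo]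
      constructor
      · rintro ⟨m, h1, h2⟩; exact ⟨h1, lt_of_le_of_lt h2 (hbs2 m)⟩
      · rintro ⟨h1, h2⟩
        obtain ⟨m, hm⟩ := (hbstend.eventually (eventually_gt_nhds h2)).exists
        exact ⟨m, h1, hm.le⟩
    have hmono' : Monotone (fun m => Set.Ioc a (bs m)) := fun m m' h =>
      Set.Ioc_subset_Ioc_right (hbsmono h)
    have hR1 : Tendsto (fun m => μc k (Set.Ioc a (bs m))) atTop (𝓝 (μc k S)) := by
      have hP := tendsto_measure_iUnion_atTop (μ := P k) hmono'
      have hN := tendsto_measure_iUnion_atTop (μ := N k) hmono'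
      rw [hUnion] at hP hN
      have hP' := (ENNReal.tendsto_toReal (hPfin k S)).comp hP
      have hN' := (ENNReal.tendsto_toReal (hNfin k S)).comp hN
      rw [sm_apply (μc k) hSm]
      exact (hP'.sub hN').congr fun m => (sm_apply (μc k) measurableSet_Ioc).symm
    have hR2 : Tendsto
        (fun m => ∑' j, (Set.Ioc a (bs m)).indicator (fun x => u x k - uL x k) (J j))
        atTop (𝓝 (T k)) := by
      rw [hTdef]
      refine tendsto_tsum_of_dominated_convergence hgsum ?_ (Eventually.of_forall fun m j => ?_)
      · intro j
        by_cases hj : J j ∈ S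
        · have hev : ∀ᶠ m in atTop, J j < bs m :=
            hbstend.eventually (eventually_gt_nhds hj.2)
          refine Tendsto.congr' ?_ (tendsto_const_nhds
            (x := S.indicator (fun x => u x k - uL x k) (J j)))
          filter_upwards [hev] with m hm
          have hmem : J j ∈ Set.Ioc a (bs m) := ⟨hj.1, hm.le⟩
          rw [Set.indicator_of_mem hj, Set.indicator_of_mem hmem]
        · have hnot : ∀ m, J j ∉ Set.Ioc a (bs m) := fun m hc =>
            hj ⟨hc.1, lt_of_le_of_lt hc.2 (hbs2 m)⟩
          simp only [Set.indicator_of_notMem hj, Set.indicator_of_notMem (hnot _)]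
          exact tendsto_const_nhds
      · by_cases hj : J j ∈ Set.Ioc a (bs m)
        · have hjS : J j ∈ S := ⟨hj.1, lt_of_le_of_lt hj.2 (hbs2 m)⟩
          rw [Set.indicator_of_mem hj, hgdef]
          simp only [Set.indicator_of_mem hjS]
          have h1 := norm_le_pi_norm (u (J j) - uL (J j)) k
          simpa using h1
        · simp [Set.indicator_of_notMem hj, hg0 j]
    have heq : ∀ m, u (bs m) k - u a k = μc k (Set.Ioc a (bs m)) +
        ∑' j, (Set.Ioc a (bs m)).indicator (fun x => u x k - uL x k) (J j) :=
      fun m => hderiv a (bs m) (hbs1 m).le k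
    exact tendsto_nhds_unique hL1 ((hR1.add hR2).congr fun m => (heq m).symm)
  -- bound on components of μc
  have hμcS_le : ∀ k, |μc k S| ≤ mC k := by
    intro k
    rw [sm_apply (μc k) hSm, hmC k]
    have h1 : (0:ℝ) ≤ (P k S).toReal := ENNReal.toReal_nonneg
    have h2 : (0:ℝ) ≤ (N k S).toReal := ENNReal.toReal_nonneg
    rw [abs_le]
    constructor <;> linarith
  -- norm bounds on uL b - u a
  have hΔD : ‖uL b - u a‖ ≤ D := by
    rw [← dist_eq_norm]
    exact hdist _ huLb_cl _ hua_cl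
  have hΔM : ‖uL b - u a‖ ≤ M := by
    refine (pi_norm_le_iff_of_nonneg hM0).2 fun k => ?_
    have h1 : ‖(uL b - u a) k‖ = |uL b k - u a k| := by simp [Real.norm_eq_abs]
    rw [h1, hId k]
    calc |μc k S + T k| ≤ |μc k S| + |T k| := abs_add_le _ _
      _ ≤ mC k + mJ := add_le_add (hμcS_le k) (hTle k)
      _ ≤ M := by rw [hMsplit]; have := Finset.single_le_sum (fun k _ => hmC0 k)
                    (Finset.mem_univ k); linarith
  -- Term 1 : Taylor at the endpoints
  have hT1 : |E (u a) (uL b) - ∑ k, l (u a) k * (uL b k - u a k)| ≤ C * (D * M) := by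
    refine le_trans (hTaylor (u a) (hu a) (uL b) huLbK) ?_
    have h1 : ‖uL b - u a‖ ^ 2 ≤ D * M := by
      have := norm_nonneg (uL b - u a)
      nlinarith
    exact mul_le_mul_of_nonneg_left h1 hC.le
  -- Term 2 : continuous part
  have hT2k : ∀ k, |l (u a) k * μc k S - sIntegral (μc k) (fun x => l (u x) k) S| ≤
      ((L : ℝ) * D) * mC k := by
    intro k
    set c : ℝ := l (u a) k with hcdef
    set f : ℝ → ℝ := fun x => l (u x) k with hfdef
    have hfm : Measurable f := by
      have h1 : Measurable fun x => (⟨u x, hu x⟩ : K) := humeas.subtype_mk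
      have h2 : Continuous fun p : K => l (p : Fin n → ℝ) k :=
        (continuous_apply k).comp hl.continuousOn.restrict
      exact h2.measurable.comp h1
    have hpoint : ∀ x ∈ S, |c - f x| ≤ (L : ℝ) * D := by
      intro x hx
      have h1 : dist (l (u a)) (l (u x)) ≤ (L : ℝ) * dist (u a) (u x) :=
        hl.dist_le_mul _ (hu a) _ (hu x)
      have h2 : dist (u a) (u x) ≤ D := hdist _ hua_cl _ (hux_cl x hx)
      have h3 : |c - f x| ≤ dist (l (u a)) (l (u x)) := by
        rw [dist_eq_norm, ← Real.norm_eq_abs]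
        exact norm_le_pi_norm (l (u a) - l (u x)) k
      calc |c - f x| ≤ (L : ℝ) * dist (u a) (u x) := h3.trans h1
        _ ≤ (L : ℝ) * D := mul_le_mul_of_nonneg_left h2 L.coe_nonneg
    have hbndP : ∀ᵐ x ∂(P k).restrict S, ‖f x‖ ≤ |c| + (L : ℝ) * D := by
      refine (ae_restrict_iff' hSm).2 (Eventually.of_forall fun x hx => ?_)
      have h3 := hpoint x hx
      have h4 : |f x| - |c| ≤ |f x - c| := abs_sub_abs_le_abs_sub _ _
      rw [abs_sub_comm] at h4
      rw [Real.norm_eq_abs]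
      linarith
    have hbndN : ∀ᵐ x ∂(N k).restrict S, ‖f x‖ ≤ |c| + (L : ℝ) * D := by
      refine (ae_restrict_iff' hSm).2 (Eventually.of_forall fun x hx => ?_)
      have h3 := hpoint x hx
      have h4 : |f x| - |c| ≤ |f x - c| := abs_sub_abs_le_abs_sub _ _
      rw [abs_sub_comm] at h4
      rw [Real.norm_eq_abs]
      linarith
    have hIntP : Integrable f ((P k).restrict S) :=
      Integrable.mono' (integrable_const _) hfm.aestronglyMeasurable hbndP
    have hIntN : Integrable f ((N k).restrict S) :=
      Integrable.mono' (integrable_const _) hfm.aestronglyMeasurable hbndN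
    have e1 : ∫ x in S, (c - f x) ∂(P k) = c * (P k S).toReal - ∫ x in S, f x ∂(P k) := by
      rw [integral_sub (integrable_const c) hIntP, setIntegral_const, smul_eq_mul, mul_comm]
      rfl
    have e2 : ∫ x in S, (c - f x) ∂(N k) = c * (N k S).toReal - ∫ x in S, f x ∂(N k) := by
      rw [integral_sub (integrable_const c) hIntN, setIntegral_const, smul_eq_mul, mul_comm]
      rfl
    have key : c * μc k S - sIntegral (μc k) f S =
        (∫ x in S, (c - f x) ∂(P k)) - ∫ x in S, (c - f x) ∂(N k) := by
      simp only [sIntegral]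
      rw [sm_apply (μc k) hSm, e1, e2]
      ring
    have b1 : ‖∫ x in S, (c - f x) ∂(P k)‖ ≤ ((L : ℝ) * D) * (P k S).toReal := by
      have h5 := norm_integral_le_of_norm_le_const (μ := (P k).restrict S)
        (C := (L : ℝ) * D) (f := fun x => c - f x)
        ((ae_restrict_iff' hSm).2 (Eventually.of_forall fun x hx => by
          rw [Real.norm_eq_abs]; exact hpoint x hx))
      rwa [measureReal_restrict_apply_univ] at h5
    have b2 : ‖∫ x in S, (c - f x) ∂(N k)‖ ≤ ((L : ℝ) * D) * (N k S).toReal := by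
      have h5 := norm_integral_le_of_norm_le_const (μ := (N k).restrict S)
        (C := (L : ℝ) * D) (f := fun x => c - f x)
        ((ae_restrict_iff' hSm).2 (Eventually.of_forall fun x hx => by
          rw [Real.norm_eq_abs]; exact hpoint x hx))
      rwa [measureReal_restrict_apply_univ] at h5
    rw [key]
    rw [hmC k]
    calc |(∫ x in S, (c - f x) ∂(P k)) - ∫ x in S, (c - f x) ∂(N k)|
        ≤ |∫ x in S, (c - f x) ∂(P k)| + |∫ x in S, (c - f x) ∂(N k)| := abs_sub _ _
      _ ≤ ((L : ℝ) * D) * (P k S).toReal + ((L : ℝ) * D) * (N k S).toReal := by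
          rw [← Real.norm_eq_abs, ← Real.norm_eq_abs (∫ x in S, (c - f x) ∂(N k))]
          exact add_le_add b1 b2
      _ = ((L : ℝ) * D) * ((P k S).toReal + (N k S).toReal) := by ring
  have hT2 : |∑ k, l (u a) k * μc k S -
      ∑ k : Fin n, sIntegral (μc k) (fun x => l (u x) k) S| ≤ ((L : ℝ) * D) * M := by
    rw [← Finset.sum_sub_distrib]
    refine le_trans (Finset.abs_sum_le_sum_abs _ _) ?_
    calc ∑ k, |l (u a) k * μc k S - sIntegral (μc k) (fun x => l (u x) k) S|
        ≤ ∑ k, ((L : ℝ) * D) * mC k := Finset.sum_le_sum fun k _ => hT2k k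
      _ = ((L : ℝ) * D) * ∑ k, mC k := by rw [← Finset.mul_sum]
      _ ≤ ((L : ℝ) * D) * M := mul_le_mul_of_nonneg_left hmCsum_le
          (mul_nonneg L.coe_nonneg hD0)
  -- Term 3 : jump part
  have hjump_cl : ∀ x ∈ S, ‖u x - uL x‖ ≤ D := by
    intro x hx
    rw [← dist_eq_norm]
    exact hdist _ (hux_cl x hx) _ (huLx_cl x hx)
  have hBbound : ∀ j, ‖S.indicator (fun x => E (uL x) (u x)) (J j)‖ ≤
      (C * D + (n : ℝ) * |R|) * g j := by
    intro j
    by_cases hj : J j ∈ S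
    · rw [Set.indicator_of_mem hj, hgdef]
      simp only [Set.indicator_of_mem hj]
      set x := J j
      have hx1 : uL x ∈ K := hclK (huLx_cl x hj)
      have hx2 : u x ∈ K := hu x
      have hTay := hTaylor (uL x) hx1 (u x) hx2
      have hterm : ∀ k : Fin n, |l (uL x) k * (u x k - uL x k)| ≤ |R| * ‖u x - uL x‖ := by
        intro k
        rw [abs_mul]
        refine mul_le_mul ?_ ?_ (abs_nonneg _) (abs_nonneg _)
        · exact le_trans (le_trans (norm_le_pi_norm (l (uL x)) k) (hR _ hx1)) (le_abs_self R)
        · rw [← Real.norm_eq_abs]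
          have h1 := norm_le_pi_norm (u x - uL x) k
          simpa using h1
      have hsum : |∑ k, l (uL x) k * (u x k - uL x k)| ≤ (n : ℝ) * |R| * ‖u x - uL x‖ := by
        refine le_trans (Finset.abs_sum_le_sum_abs _ _) ?_
        calc ∑ k, |l (uL x) k * (u x k - uL x k)| ≤ ∑ _k : Fin n, |R| * ‖u x - uL x‖ :=
              Finset.sum_le_sum fun k _ => hterm k
          _ = (n : ℝ) * |R| * ‖u x - uL x‖ := by
              rw [Finset.sum_const, Finset.card_univ, Fintype.card_fin]; ring
      have hsq : ‖u x - uL x‖ ^ 2 ≤ D * ‖u x - uL x‖ := by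
        have h1 := hjump_cl x hj
        nlinarith [norm_nonneg (u x - uL x)]
      rw [Real.norm_eq_abs]
      calc |E (uL x) (u x)| ≤ |E (uL x) (u x) - ∑ k, l (uL x) k * (u x k - uL x k)| +
            |∑ k, l (uL x) k * (u x k - uL x k)| := by
            have := abs_add_le (E (uL x) (u x) - ∑ k, l (uL x) k * (u x k - uL x k))
              (∑ k, l (uL x) k * (u x k - uL x k))
            simpa using this
        _ ≤ C * ‖u x - uL x‖ ^ 2 + (n : ℝ) * |R| * ‖u x - uL x‖ := add_le_add hTay hsum
        _ ≤ C * (D * ‖u x - uL x‖) + (n : ℝ) * |R| * ‖u x - uL x‖ := by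
            have := mul_le_mul_of_nonneg_left hsq hC.le
            linarith
        _ = (C * D + (n : ℝ) * |R|) * ‖u x - uL x‖ := by ring
    · have hgj : g j = 0 := Set.indicator_of_notMem hj _
      simp [Set.indicator_of_notMem hj, hgj]
  have hBsum : Summable (fun j => S.indicator (fun x => E (uL x) (u x)) (J j)) :=
    Summable.of_norm_bounded (hgsum.mul_left _) hBbound
  have hswapsum : ∀ k, Summable (fun j =>
      l (u a) k * S.indicator (fun x => u x k - uL x k) (J j)) :=
    fun k => (hTsum k).mul_left _
  have hswap : ∑ k, l (u a) k * T k =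
      ∑' j, ∑ k, l (u a) k * S.indicator (fun x => u x k - uL x k) (J j) := by
    rw [Summable.tsum_finsetSum fun k _ => hswapsum k]
    refine Finset.sum_congr rfl fun k _ => ?_
    rw [hTdef, tsum_mul_left]
  have hT3term : ∀ j, ‖(∑ k, l (u a) k * S.indicator (fun x => u x k - uL x k) (J j)) -
      S.indicator (fun x => E (uL x) (u x)) (J j)‖ ≤ ((C + (n : ℝ) * L) * D) * g j := by
    intro j
    by_cases hj : J j ∈ S
    · simp only [Set.indicator_of_mem hj, hgdef]
      set x := J j
      have hx1 : uL x ∈ K := hclK (huLx_cl x hj)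
      have hx2 : u x ∈ K := hu x
      have hTay := hTaylor (uL x) hx1 (u x) hx2
      have hnD : ‖u x - uL x‖ ≤ D := hjump_cl x hj
      have hlip : ∀ k : Fin n, |l (u a) k - l (uL x) k| ≤ (L : ℝ) * D := by
        intro k
        have h1 : dist (l (u a)) (l (uL x)) ≤ (L : ℝ) * dist (u a) (uL x) :=
          hl.dist_le_mul _ (hu a) _ hx1
        have h2 : dist (u a) (uL x) ≤ D := hdist _ hua_cl _ (huLx_cl x hj)
        have h3 : |l (u a) k - l (uL x) k| ≤ dist (l (u a)) (l (uL x)) := by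
          rw [dist_eq_norm, ← Real.norm_eq_abs]
          exact norm_le_pi_norm (l (u a) - l (uL x)) k
        calc |l (u a) k - l (uL x) k| ≤ (L : ℝ) * dist (u a) (uL x) := h3.trans h1
          _ ≤ (L : ℝ) * D := mul_le_mul_of_nonneg_left h2 L.coe_nonneg
      have hdiff : |∑ k, (l (u a) k - l (uL x) k) * (u x k - uL x k)| ≤
          (n : ℝ) * ((L : ℝ) * D) * ‖u x - uL x‖ := by
        refine le_trans (Finset.abs_sum_le_sum_abs _ _) ?_
        calc ∑ k, |(l (u a) k - l (uL x) k) * (u x k - uL x k)|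
            ≤ ∑ _k : Fin n, ((L : ℝ) * D) * ‖u x - uL x‖ := by
              refine Finset.sum_le_sum fun k _ => ?_
              rw [abs_mul]
              refine mul_le_mul (hlip k) ?_ (abs_nonneg _)
                (mul_nonneg L.coe_nonneg hD0)
              rw [← Real.norm_eq_abs]
              have h1 := norm_le_pi_norm (u x - uL x) k
              simpa using h1
          _ = (n : ℝ) * ((L : ℝ) * D) * ‖u x - uL x‖ := by
              rw [Finset.sum_const, Finset.card_univ, Fintype.card_fin]; ring
      have hsq : ‖u x - uL x‖ ^ 2 ≤ D * ‖u x - uL x‖ := by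
        nlinarith [norm_nonneg (u x - uL x)]
      have hsplit : (∑ k, l (u a) k * (u x k - uL x k)) - E (uL x) (u x) =
          (∑ k, (l (u a) k - l (uL x) k) * (u x k - uL x k)) -
            (E (uL x) (u x) - ∑ k, l (uL x) k * (u x k - uL x k)) := by
        have h0 : ∑ k, (l (u a) k - l (uL x) k) * (u x k - uL x k) =
            (∑ k, l (u a) k * (u x k - uL x k)) - ∑ k, l (uL x) k * (u x k - uL x k) := by
          rw [← Finset.sum_sub_distrib]
          exact Finset.sum_congr rfl fun k _ => by ring
        rw [h0]
        ring
      rw [Real.norm_eq_abs, hsplit]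
      calc |(∑ k, (l (u a) k - l (uL x) k) * (u x k - uL x k)) -
            (E (uL x) (u x) - ∑ k, l (uL x) k * (u x k - uL x k))|
          ≤ |∑ k, (l (u a) k - l (uL x) k) * (u x k - uL x k)| +
            |E (uL x) (u x) - ∑ k, l (uL x) k * (u x k - uL x k)| := abs_sub _ _
        _ ≤ (n : ℝ) * ((L : ℝ) * D) * ‖u x - uL x‖ + C * ‖u x - uL x‖ ^ 2 :=
            add_le_add hdiff hTay
        _ ≤ (n : ℝ) * ((L : ℝ) * D) * ‖u x - uL x‖ + C * (D * ‖u x - uL x‖) := by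
            have := mul_le_mul_of_nonneg_left hsq hC.le
            linarith
        _ = ((C + (n : ℝ) * L) * D) * ‖u x - uL x‖ := by ring
    · have hgj : g j = 0 := Set.indicator_of_notMem hj _
      simp [Set.indicator_of_notMem hj, hgj]
  have hT3 : |∑ k, l (u a) k * T k -
      ∑' j, S.indicator (fun x => E (uL x) (u x)) (J j)| ≤ ((C + (n : ℝ) * L) * D) * mJ := by
    rw [hswap, ← Summable.tsum_sub (summable_sum fun k _ => hswapsum k) hBsum, ← Real.norm_eq_abs,
      ← hgtsum, ← tsum_mul_left]
    exact tsum_of_norm_bounded (Summable.hasSum (hgsum.mul_left _)) hT3term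
  -- assembly
  have hkey : E (u a) (uL b) - waveMeasure E l u uL μc J S =
      (E (u a) (uL b) - ∑ k, l (u a) k * (uL b k - u a k)) +
      (∑ k, l (u a) k * μc k S - ∑ k : Fin n, sIntegral (μc k) (fun x => l (u x) k) S) +
      (∑ k, l (u a) k * T k - ∑' j, S.indicator (fun x => E (uL x) (u x)) (J j)) := by
    have hw : waveMeasure E l u uL μc J S =
        (∑ k : Fin n, sIntegral (μc k) (fun x => l (u x) k) S) +
          ∑' j, S.indicator (fun x => E (uL x) (u x)) (J j) := rfl
    have hsum : ∑ k, l (u a) k * (uL b k - u a k) =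
        ∑ k, l (u a) k * μc k S + ∑ k, l (u a) k * T k := by
      rw [← Finset.sum_add_distrib]
      refine Finset.sum_congr rfl fun k _ => ?_
      rw [hId k, mul_add]
    rw [hw, hsum]
    ring
  rw [hkey]
  have final : |(E (u a) (uL b) - ∑ k, l (u a) k * (uL b k - u a k)) +
      (∑ k, l (u a) k * μc k S - ∑ k : Fin n, sIntegral (μc k) (fun x => l (u x) k) S) +
      (∑ k, l (u a) k * T k - ∑' j, S.indicator (fun x => E (uL x) (u x)) (J j))| ≤
      C * (D * M) + ((L : ℝ) * D) * M + ((C + (n : ℝ) * L) * D) * mJ := by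
    refine le_trans (abs_add_le _ _) ?_
    refine add_le_add (le_trans (abs_add_le _ _) (add_le_add hT1 hT2)) hT3
  refine le_trans final ?_
  have hDM : 0 ≤ D * M := mul_nonneg hD0 hM0
  have hmJM : ((C + (n : ℝ) * L) * D) * mJ ≤ ((C + (n : ℝ) * L) * D) * M := by
    refine mul_le_mul_of_nonneg_left hmJ_le ?_
    have : (0:ℝ) ≤ (n : ℝ) * L := mul_nonneg (Nat.cast_nonneg n) L.coe_nonneg
    positivity
  have hL0 : (0:ℝ) ≤ (L : ℝ) := L.coe_nonneg
  have hn0 : (0:ℝ) ≤ (n : ℝ) := Nat.cast_nonneg n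
  nlinarith [hDM, hmJM, hC.le]
end

section
/- Let u : ℝ → ℝⁿ be right continuous with bounded total variation, integrable, and with distributional derivative μ. Then there exists a sequence v_ν of piecewise constant functions (with finitely many jumps, each value of v_ν being a one-sided trace of u at some point) such that v_ν → u both in L¹(ℝ;ℝⁿ) and in L^∞(ℝ;ℝⁿ), and TV(v_ν) ≤ TV(u) for all ν. -/
set_option maxHeartbeats 1000000
set_option linter.unusedVariables false

open Filter Set MeasureTheory
open scoped ENNReal NNReal

private lemma tendsto_atBot_zero_of_bv {n : ℕ} (f : ℝ → Fin n → ℝ)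
    (hBV : eVariationOn f Set.univ ≠ ⊤) (hint : Integrable f) :
    Tendsto f atBot (nhds 0) := by
  set W : ℝ → ℝ≥0∞ := fun x => eVariationOn f (Iic x) with hW
  have hWmono : Monotone W := fun x y h => eVariationOn.mono f (Iic_subset_Iic.2 h)
  have hWtop : ∀ x, W x ≠ ⊤ := fun x =>
    ne_top_of_le_ne_top hBV (eVariationOn.mono f (subset_univ _))
  have key : ∀ x y : ℝ, x ≤ y → W x + edist (f x) (f y) ≤ W y := by
    intro x y h
    have h1 : edist (f x) (f y) ≤ eVariationOn f (Icc x y) :=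
      eVariationOn.edist_le f ⟨le_rfl, h⟩ ⟨h, le_rfl⟩
    calc W x + edist (f x) (f y) ≤ W x + eVariationOn f (Icc x y) := by gcongr
      _ ≤ eVariationOn f (Iic x ∪ Icc x y) :=
        eVariationOn.add_le_union f (fun a ha b hb => le_trans ha hb.1)
      _ = W y := by rw [Set.Iic_union_Icc_eq_Iic h]
  set I := ⨅ x, W x with hI
  have hItop : I ≠ ⊤ := ne_top_of_le_ne_top (hWtop 0) (iInf_le _ 0)
  have htend : Tendsto W atBot (nhds I) := tendsto_atBot_iInf hWmono
  have hc : Cauchy (map f atBot) := by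
    rw [EMetric.cauchy_iff]
    refine ⟨map_neBot.ne', ?_⟩
    intro ε hε
    have hev : ∀ᶠ x in atBot, W x < I + ε :=
      htend.eventually_lt_const (ENNReal.lt_add_right hItop hε.ne')
    obtain ⟨A, hA⟩ := eventually_atBot.1 hev
    refine ⟨f '' Iic A, image_mem_map (Iic_mem_atBot A), ?_⟩
    rintro _ ⟨x, hx, rfl⟩ _ ⟨y, hy, rfl⟩
    have main : ∀ p q : ℝ, p ≤ q → q ≤ A → edist (f p) (f q) < ε := by
      intro p q hpq hqA
      have h1 := key p q hpq
      have h2 : I + edist (f p) (f q) ≤ W p + edist (f p) (f q) := by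
        gcongr; exact iInf_le _ _
      have h3 : I + edist (f p) (f q) < I + ε :=
        lt_of_le_of_lt (h2.trans h1) (hA q hqA)
      exact (ENNReal.add_lt_add_iff_left hItop).1 h3
    rcases le_total x y with h | h
    · exact main x y h hy
    · rw [edist_comm]; exact main y x h hx
  obtain ⟨L, hL⟩ := CompleteSpace.complete hc
  have hLt : Tendsto f atBot (nhds L) := hL
  have hL0 : L = 0 := by
    by_contra h0
    have hnorm : 0 < ‖L‖ := norm_pos_iff.2 h0
    have hev : ∀ᶠ x in atBot, ‖L‖ / 2 ≤ ‖f x‖ := by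
      filter_upwards [hLt.eventually (Metric.ball_mem_nhds L (half_pos hnorm))] with x hx
      have : ‖f x - L‖ < ‖L‖ / 2 := by
        rw [dist_eq_norm] at hx; exact hx
      have := norm_sub_norm_le (f x) L
      linarith [abs_le.1 (abs_norm_sub_norm_le (f x) L)]
    obtain ⟨A, hA⟩ := eventually_atBot.1 hev
    have hfin := hint.2
    rw [hasFiniteIntegral_def] at hfin
    have hge : ENNReal.ofReal (‖L‖ / 2) * volume (Iic A) ≤ ∫⁻ a, ‖f a‖₊ := by
      calc ENNReal.ofReal (‖L‖ / 2) * volume (Iic A)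
          = ∫⁻ _ in Iic A, ENNReal.ofReal (‖L‖ / 2) := (setLIntegral_const _ _).symm
        _ ≤ ∫⁻ a in Iic A, (‖f a‖₊ : ℝ≥0∞) := by
            refine setLIntegral_mono' measurableSet_Iic (fun x hx => ?_)
            rw [← enorm_eq_nnnorm, ← ofReal_norm]
            exact ENNReal.ofReal_le_ofReal (hA x hx)
        _ ≤ ∫⁻ a, ‖f a‖₊ := setLIntegral_le_lintegral _ _
    rw [Real.volume_Iic, ENNReal.mul_top (by positivity)] at hge
    exact absurd hfin (by simp [enorm_eq_nnnorm, top_le_iff.1 hge])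
  rwa [hL0] at hLt

private lemma tendsto_atTop_zero_of_bv {n : ℕ} (f : ℝ → Fin n → ℝ)
    (hBV : eVariationOn f Set.univ ≠ ⊤) (hint : Integrable f) :
    Tendsto f atTop (nhds 0) := by
  have hBV' : eVariationOn (f ∘ Neg.neg) Set.univ ≠ ⊤ := by
    rw [eVariationOn.comp_eq_of_antitoneOn f Neg.neg
      (fun a _ b _ h => neg_le_neg h)]
    rwa [Set.image_univ, neg_surjective.range_eq]
  have hint' : Integrable (f ∘ Neg.neg) := hint.comp_neg
  have h := tendsto_atBot_zero_of_bv (f ∘ Neg.neg) hBV' hint'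
  have h2 := h.comp tendsto_neg_atTop_atBot
  have : ((f ∘ Neg.neg) ∘ Neg.neg) = f := by ext x i; simp
  rwa [this] at h2

private lemma key_approx {n : ℕ} (u : ℝ → Fin n → ℝ)
    (hrc : ∀ x : ℝ, Tendsto u (nhdsWithin x (Set.Ioi x)) (nhds (u x)))
    (hBV : eVariationOn u Set.univ ≠ ⊤)
    (hint : Integrable u) (ε δ : ℝ) (hε : 0 < ε) (hδ : 0 < δ) :
    ∃ (w : ℝ → Fin n → ℝ) (N : ℕ) (pts : Fin (N + 1) → ℝ), StrictMono pts ∧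
      (∀ y : ℝ, y < pts 0 → w y = 0) ∧
      (∀ y : ℝ, pts (Fin.last N) ≤ y → w y = 0) ∧
      (∀ i : Fin N, ∀ y ∈ Set.Ico (pts i.castSucc) (pts i.succ), w y = w (pts i.castSucc)) ∧
      (∀ y : ℝ, w y = 0 ∨ ∃ p : ℝ, w y = u p) ∧
      (∀ y : ℝ, ‖w y - u y‖ ≤ ε) ∧
      (∫ y : ℝ, ‖w y - u y‖) ≤ δ ∧
      eVariationOn w Set.univ ≤ eVariationOn u Set.univ := by
  classical
  have hbot := tendsto_atBot_zero_of_bv u hBV hint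
  have htop := tendsto_atTop_zero_of_bv u hBV hint
  have hbotev : ∀ r : ℝ, 0 < r → ∀ᶠ x in atBot, ‖u x‖ ≤ r := by
    intro r hr
    filter_upwards [hbot.eventually (Metric.ball_mem_nhds 0 hr)] with x hx
    rw [dist_zero_right] at hx; exact hx.le
  have htopev : ∀ r : ℝ, 0 < r → ∀ᶠ x in atTop, ‖u x‖ ≤ r := by
    intro r hr
    filter_upwards [htop.eventually (Metric.ball_mem_nhds 0 hr)] with x hx
    rw [dist_zero_right] at hx; exact hx.le
  obtain ⟨A₁, hA₁⟩ := eventually_atBot.1 (hbotev ε hε)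
  obtain ⟨B₁, hB₁⟩ := eventually_atTop.1 (htopev ε hε)
  -- tail integral control
  have hg : Integrable (fun y : ℝ => ‖u y‖) := hint.norm
  have hsm : ∀ i : ℕ, MeasurableSet (Ico (-(i : ℝ)) (i : ℝ)) := fun i => measurableSet_Ico
  have hmono : Monotone (fun i : ℕ => Ico (-(i : ℝ)) (i : ℝ)) := fun i j hij =>
    Ico_subset_Ico (neg_le_neg (Nat.cast_le.2 hij)) (Nat.cast_le.2 hij)
  have hunion : (⋃ i : ℕ, Ico (-(i : ℝ)) (i : ℝ)) = univ := by
    ext x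
    simp only [mem_iUnion, mem_Ico, mem_univ, iff_true]
    obtain ⟨i, hi⟩ := exists_nat_gt |x|
    obtain ⟨h1, h2⟩ := abs_lt.1 hi
    exact ⟨i, by linarith, h2⟩
  have htint : Tendsto (fun i : ℕ => ∫ y in Ico (-(i : ℝ)) (i : ℝ), ‖u y‖) atTop
      (nhds (∫ y : ℝ, ‖u y‖)) := by
    have := tendsto_setIntegral_of_monotone hsm hmono (by rw [hunion]; exact hg.integrableOn)
    rwa [hunion, setIntegral_univ] at this
  obtain ⟨i, hi⟩ := (htint.eventually_const_lt
    (by linarith : (∫ y : ℝ, ‖u y‖) - δ / 2 < ∫ y : ℝ, ‖u y‖)).exists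
  set a : ℝ := min A₁ (-(i : ℝ)) - 1 with hadef
  set b : ℝ := max B₁ (i : ℝ) + 1 with hbdef
  have hinonneg : (0:ℝ) ≤ i := Nat.cast_nonneg i
  have haA : a ≤ A₁ := by
    have := min_le_left A₁ (-(i : ℝ)); simp only [hadef]; linarith
  have hai : a + 1 ≤ -(i:ℝ) := by
    have := min_le_right A₁ (-(i : ℝ)); simp only [hadef]; linarith
  have hbB : B₁ ≤ b := by
    have := le_max_left B₁ (i:ℝ); simp only [hbdef]; linarith
  have hbi : (i:ℝ) + 1 ≤ b := by
    have := le_max_right B₁ (i:ℝ); simp only [hbdef]; linarith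
  have hab : a < b := by linarith
  have ha : ∀ x ≤ a, ‖u x‖ ≤ ε := fun x hx => hA₁ x (le_trans hx haA)
  have hb : ∀ x, b ≤ x → ‖u x‖ ≤ ε := fun x hx => hB₁ x (le_trans hbB hx)
  have htail : (∫ y in (Ico a b)ᶜ, ‖u y‖) ≤ δ / 2 := by
    have hsub : Ico (-(i : ℝ)) (i : ℝ) ⊆ Ico a b := Ico_subset_Ico (by linarith) (by linarith)
    have h1 : (∫ y in (Ico a b)ᶜ, ‖u y‖) ≤ ∫ y in (Ico (-(i : ℝ)) (i : ℝ))ᶜ, ‖u y‖ :=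
      setIntegral_mono_set hg.integrableOn (ae_of_all _ fun y => norm_nonneg _)
        (HasSubset.Subset.eventuallyLE (compl_subset_compl.2 hsub))
    have h2 := integral_add_compl (hsm i) hg
    linarith
  set ε' : ℝ := min ε (δ / (2 * (b - a))) with hε'def
  have hε' : 0 < ε' := lt_min hε (div_pos hδ (by linarith))
  have hε'ε : ε' ≤ ε := min_le_left _ _
  -- the adaptive partition
  set S : ℝ → Set ℝ := fun c => {x | c < x ∧ (b ≤ x ∨ ε' ≤ ‖u x - u c‖)} with hS
  set t : ℕ → ℝ := fun k => Nat.rec a (fun _ c => sInf (S c)) k with ht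
  have ht0 : t 0 = a := rfl
  have htsucc : ∀ k, t (k + 1) = sInf (S (t k)) := fun k => rfl
  have hbmem : ∀ c, c < b → b ∈ S c := fun c hc => ⟨hc, Or.inl le_rfl⟩
  have hbdd : ∀ c, BddBelow (S c) := fun c => ⟨c, fun x hx => hx.1.le⟩
  have hinf_le_b : ∀ c, c < b → sInf (S c) ≤ b := fun c hc => csInf_le (hbdd c) (hbmem c hc)
  have hlt_inf : ∀ c, c < b → c < sInf (S c) := by
    intro c hc
    obtain ⟨η, hη, hηs⟩ := Metric.tendsto_nhdsWithin_nhds.1 (hrc c) ε' hε'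
    have hmin : c < min (c + η) b := lt_min (by linarith) hc
    refine lt_of_lt_of_le hmin (le_csInf ⟨b, hbmem c hc⟩ ?_)
    intro x hx
    rcases hx.2 with hbx | hux
    · exact le_trans (min_le_right _ _) hbx
    · refine le_trans (min_le_left _ _) ?_
      by_contra hlt
      push_neg at hlt
      have hdist : dist x c < η := by
        rw [Real.dist_eq, abs_of_pos (sub_pos.2 hx.1)]; linarith
      have := hηs hx.1 hdist
      rw [dist_eq_norm] at this; linarith
  have hjump : ∀ c, c < b → sInf (S c) < b → ε' ≤ ‖u (sInf (S c)) - u c‖ := by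
    intro c hc hd
    by_contra h'
    push_neg at h'
    set d := sInf (S c) with hd'
    have hcd : c < d := hlt_inf c hc
    have hrpos : 0 < ε' - ‖u d - u c‖ := by linarith
    obtain ⟨η, hη, hηs⟩ := Metric.tendsto_nhdsWithin_nhds.1 (hrc d) _ hrpos
    set η' := min η (b - d) with hη'
    have hη'pos : 0 < η' := lt_min hη (by linarith)
    have hlb : ∀ x ∈ S c, d + η' ≤ x := by
      intro x hx
      have hdx : d ≤ x := csInf_le (hbdd c) hx
      by_contra hlt
      push_neg at hlt
      have hxb : x < b := by
        have : η' ≤ b - d := min_le_right _ _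
        linarith
      have hxnorm : ε' ≤ ‖u x - u c‖ := hx.2.resolve_left (not_le.2 hxb)
      rcases eq_or_lt_of_le hdx with heq | hdx'
      · rw [← heq] at hxnorm; linarith
      · have hdist : dist x d < η := by
          rw [Real.dist_eq, abs_of_pos (sub_pos.2 hdx')]
          have : η' ≤ η := min_le_left _ _
          linarith
        have h2 := hηs hdx' hdist
        rw [dist_eq_norm] at h2
        have h3 : ‖u x - u c‖ ≤ ‖u x - u d‖ + ‖u d - u c‖ := by
          have := norm_add_le (u x - u d) (u d - u c)
          simpa using this
        linarith
    have : d + η' ≤ d := le_csInf ⟨b, hbmem c hc⟩ hlb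
    linarith
  have hosc : ∀ c, c < b → ∀ y, c ≤ y → y < sInf (S c) → ‖u y - u c‖ < ε' := by
    intro c hc y hcy hy
    rcases eq_or_lt_of_le hcy with heq | hcy'
    · rw [← heq]; simpa using hε'
    · by_contra h'
      push_neg at h'
      exact absurd (csInf_le (hbdd c) ⟨hcy', Or.inr h'⟩) (not_le.2 hy)
  have hle : ∀ k, t k ≤ b := by
    intro k; induction k with
    | zero => exact hab.le
    | succ k ih =>
      rcases lt_or_eq_of_le ih with h | h
      · rw [htsucc]; exact hinf_le_b _ h
      · rw [htsucc, h]
        have hSb : S b = Ioi b := by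
          ext x
          constructor
          · exact fun hx => hx.1
          · exact fun hx => ⟨hx, Or.inl (le_of_lt hx)⟩
        rw [hSb, csInf_Ioi]
  have hstep : ∀ k, t k < b → t k < t (k + 1) := fun k h => by
    rw [htsucc]; exact hlt_inf _ h
  have hterm : ∃ k, t k = b := by
    by_contra hterm
    push_neg at hterm
    have hltb : ∀ k, t k < b := fun k => lt_of_le_of_ne (hle k) (hterm k)
    have hmn : Monotone t := monotone_nat_of_le_succ fun k => (hstep k (hltb k)).le
    have hlow : ∀ k : ℕ, ENNReal.ofReal ε' ≤ edist (u (t (k + 1))) (u (t k)) := by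
      intro k
      have h1 := hjump (t k) (hltb k) (by rw [← htsucc]; exact hltb (k + 1))
      rw [← htsucc] at h1
      rw [edist_dist, dist_eq_norm]
      exact ENNReal.ofReal_le_ofReal h1
    obtain ⟨m, hm⟩ := exists_nat_gt ((eVariationOn u Set.univ).toReal / ε')
    have hsum : (m : ℝ≥0∞) * ENNReal.ofReal ε' ≤ eVariationOn u Set.univ := by
      calc (m : ℝ≥0∞) * ENNReal.ofReal ε'
          = ∑ _i ∈ Finset.range m, ENNReal.ofReal ε' := by
            rw [Finset.sum_const, Finset.card_range, nsmul_eq_mul]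
        _ ≤ ∑ i ∈ Finset.range m, edist (u (t (i + 1))) (u (t i)) :=
            Finset.sum_le_sum fun i _ => hlow i
        _ ≤ eVariationOn u Set.univ := eVariationOn.sum_le (f := u) (n := m) hmn fun i => mem_univ _
    have h1 : (m : ℝ) * ε' ≤ (eVariationOn u Set.univ).toReal := by
      have h2 := ENNReal.toReal_mono hBV hsum
      rwa [ENNReal.toReal_mul, ENNReal.toReal_natCast, ENNReal.toReal_ofReal hε'.le] at h2
    rw [div_lt_iff₀ hε'] at hm
    linarith
  set K := Nat.find hterm with hKdef
  have hK : t K = b := Nat.find_spec hterm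
  have hKpos : 0 < K := by
    rcases Nat.eq_zero_or_pos K with h | h
    · exfalso; rw [h, ht0] at hK; exact hab.ne hK
    · exact h
  have hltK : ∀ k, k < K → t k < b := fun k hk =>
    lt_of_le_of_ne (hle k) (Nat.find_min hterm hk)
  have hmonoK : ∀ j k, j ≤ k → k ≤ K → t j ≤ t k := by
    intro j k hjk hkK
    induction k with
    | zero => rw [Nat.le_zero.1 hjk]
    | succ k ih =>
      rcases Nat.lt_or_ge j (k + 1) with h | h
      · have h1 : t j ≤ t k := ih (Nat.lt_succ_iff.1 h) (le_trans (Nat.le_succ k) hkK)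
        exact le_trans h1 (hstep k (hltK k hkK)).le
      · rw [le_antisymm hjk h]
  have hsmK : ∀ j k, j < k → k ≤ K → t j < t k := fun j k hjk hkK =>
    lt_of_lt_of_le (hstep j (hltK j (lt_of_lt_of_le hjk hkK))) (hmonoK (j + 1) k hjk hkK)
  have hta : ∀ k, k ≤ K → a ≤ t k := fun k hk => by
    rw [← ht0]; exact hmonoK 0 k (Nat.zero_le _) hk
  -- index function
  set fg : ℝ → ℕ := fun y => Nat.findGreatest (fun k => t k ≤ y) K with hfgdef
  have hfg_le : ∀ y, fg y ≤ K := fun y => Nat.findGreatest_le K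
  have hfg : ∀ y, a ≤ y → y < b → fg y < K ∧ t (fg y) ≤ y ∧ y < t (fg y + 1) := by
    intro y hay hyb
    have hP0 : t 0 ≤ y := by rw [ht0]; exact hay
    have hspec : t (fg y) ≤ y := Nat.findGreatest_spec (P := fun k => t k ≤ y) (Nat.zero_le K) hP0
    have hlt : fg y < K := by
      rcases lt_or_eq_of_le (hfg_le y) with h | h
      · exact h
      · exfalso; rw [h, hK] at hspec; linarith
    refine ⟨hlt, hspec, ?_⟩
    by_contra h'
    push_neg at h'
    have h2 : fg y + 1 ≤ fg y := Nat.le_findGreatest (P := fun k => t k ≤ y) hlt h'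
    omega
  have hfg_eq : ∀ (k : ℕ) (y : ℝ), k < K → t k ≤ y → y < t (k + 1) → fg y = k := by
    intro k y hkK hky hyk
    have hay : a ≤ y := le_trans (hta k hkK.le) hky
    have hyb : y < b := lt_of_lt_of_le hyk (by rw [← hK]; exact hmonoK (k + 1) K hkK le_rfl)
    obtain ⟨hlt, hspec, hnext⟩ := hfg y hay hyb
    have h1 : k ≤ fg y := Nat.le_findGreatest hkK.le hky
    have h2 : fg y ≤ k := by
      by_contra h'
      push_neg at h'
      have h3 : t (k + 1) ≤ t (fg y) := hmonoK (k + 1) (fg y) h' (hfg_le y)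
      linarith
    omega
  -- the step function
  set w : ℝ → Fin n → ℝ := fun y => if a ≤ y ∧ y < b then u (t (fg y)) else 0 with hw
  have hmid : ∀ y, a ≤ y → y < b → ‖w y - u y‖ < ε' := by
    intro y hay hyb
    obtain ⟨hlt, hspec, hnext⟩ := hfg y hay hyb
    have hwy : w y = u (t (fg y)) := if_pos ⟨hay, hyb⟩
    have h1 := hosc (t (fg y)) (hltK _ hlt) y hspec (by rw [← htsucc]; exact hnext)
    rw [hwy, ← norm_sub_rev]
    exact h1
  have hout : ∀ y, ¬(a ≤ y ∧ y < b) → w y = 0 := fun y h => if_neg h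
  refine ⟨w, K, fun j : Fin (K + 1) => t (j : ℕ), ?_, ?_, ?_, ?_, ?_, ?_, ?_, ?_⟩
  · -- StrictMono
    intro j j' hjj'
    exact hsmK _ _ hjj' (Nat.lt_succ_iff.1 j'.isLt)
  · -- left zero
    intro y hy
    simp only [Fin.val_zero, ht0] at hy
    exact hout y fun h => absurd h.1 (not_le.2 hy)
  · -- right zero
    intro y hy
    simp only [Fin.val_last, hK] at hy
    exact hout y fun h => absurd h.2 (not_lt.2 hy)
  · -- piecewise constant
    intro j y hy
    simp only [Fin.coe_castSucc, Fin.val_succ] at hy ⊢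
    obtain ⟨h1, h2⟩ := hy
    have hjK : (j : ℕ) < K := j.isLt
    have hfy : fg y = (j : ℕ) := hfg_eq _ y hjK h1 h2
    have hfj : fg (t (j : ℕ)) = (j : ℕ) :=
      hfg_eq _ _ hjK le_rfl (hstep _ (hltK _ hjK))
    have hay : a ≤ y := le_trans (hta _ hjK.le) h1
    have hyb : y < b := lt_of_lt_of_le h2 (by rw [← hK]; exact hmonoK _ K hjK le_rfl)
    have h3 : w y = u (t (fg y)) := if_pos ⟨hay, hyb⟩
    have h4 : w (t (j : ℕ)) = u (t (fg (t (j : ℕ)))) :=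
      if_pos ⟨hta _ hjK.le, hltK _ hjK⟩
    rw [h3, h4, hfy, hfj]
  · -- values
    intro y
    by_cases h : a ≤ y ∧ y < b
    · exact Or.inr ⟨t (fg y), if_pos h⟩
    · exact Or.inl (hout y h)
  · -- uniform bound
    intro y
    by_cases h : a ≤ y ∧ y < b
    · exact le_trans (hmid y h.1 h.2).le hε'ε
    · rw [hout y h, zero_sub, norm_neg]
      rcases not_and_or.1 h with h' | h'
      · exact ha y (not_le.1 h').le
      · exact hb y (not_lt.1 h')
  · -- integral bound
    have hIab : MeasurableSet (Ico a b) := measurableSet_Ico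
    have hbnd : ∀ y, ‖w y - u y‖ ≤
        (Ico a b).indicator (fun _ => ε') y + (Ico a b)ᶜ.indicator (fun z => ‖u z‖) y := by
      intro y
      by_cases h : y ∈ Ico a b
      · rw [indicator_of_mem h, indicator_of_notMem (by simpa using h)]
        have := hmid y h.1 h.2
        linarith
      · rw [indicator_of_notMem h, indicator_of_mem (by simpa using h)]
        rw [hout y (by simpa [mem_Ico] using h), zero_sub, norm_neg]
        simp
    have hint1 : Integrable ((Ico a b).indicator (fun _ => ε') : ℝ → ℝ) := by
      rw [integrable_indicator_iff hIab]
      exact integrableOn_const (by rw [Real.volume_Ico]; exact ENNReal.ofReal_ne_top)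
    have hint2 : Integrable ((Ico a b)ᶜ.indicator fun z : ℝ => ‖u z‖) :=
      hg.indicator hIab.compl
    have hIle : (∫ y : ℝ, ‖w y - u y‖) ≤ ∫ y : ℝ,
        ((Ico a b).indicator (fun _ => ε') y + (Ico a b)ᶜ.indicator (fun z => ‖u z‖) y) :=
      integral_mono_of_nonneg (ae_of_all _ fun y => norm_nonneg _) (hint1.add hint2)
        (ae_of_all _ hbnd)
    rw [integral_add hint1 hint2, integral_indicator_const _ hIab,
      integral_indicator hIab.compl] at hIle
    have hvol : volume.real (Ico a b) = b - a := by
      rw [measureReal_def, Real.volume_Ico, ENNReal.toReal_ofReal (by linarith)]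
    rw [hvol] at hIle
    have h5 : (b - a) * ε' ≤ δ / 2 := by
      have hba : (0:ℝ) < b - a := by linarith
      rw [mul_comm, ← le_div_iff₀ hba]
      calc ε' ≤ δ / (2 * (b - a)) := min_le_right _ _
        _ = δ / 2 / (b - a) := by rw [div_div]
    rw [smul_eq_mul] at hIle
    exact le_trans hIle (le_trans (add_le_add h5 htail) (by linarith))
  · -- total variation bound
    refine iSup_le ?_
    rintro ⟨m, x, hxm, -⟩
    dsimp only
    apply ENNReal.le_of_forall_pos_le_add
    intro η hη _
    set δ₀ : ℝ := (η : ℝ) / (2 * m + 2) with hδ₀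
    have hηpos : (0:ℝ) < η := hη
    have hδ₀pos : 0 < δ₀ := by positivity
    obtain ⟨s, hs1, hs2⟩ := ((hbotev δ₀ hδ₀pos).and (eventually_lt_atBot a)).exists
    obtain ⟨s', hs'1, hs'2⟩ := ((htopev δ₀ hδ₀pos).and (eventually_ge_atTop b)).exists
    set σ : ℝ → ℝ := fun y => if y < a then s else if y < b then t (fg y) else s' with hσ
    have hσmono : Monotone σ := by
      intro y y' hyy'
      by_cases hy : y < a
      · by_cases hy' : y' < a
        · simp [hσ, hy, hy']
        · by_cases hy'2 : y' < b
          · simp only [hσ, if_pos hy, if_neg hy', if_pos hy'2]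
            exact le_trans hs2.le (hta _ (hfg_le y'))
          · simp only [hσ, if_pos hy, if_neg hy', if_neg hy'2]
            linarith
      · have hy'a : ¬ y' < a := fun h => hy (lt_of_le_of_lt hyy' h)
        by_cases hy2 : y < b
        · by_cases hy'2 : y' < b
          · simp only [hσ, if_neg hy, if_neg hy'a, if_pos hy2, if_pos hy'2]
            have h1 := (hfg y (not_lt.1 hy) hy2).2.1
            have h2 : fg y ≤ fg y' := Nat.le_findGreatest (hfg_le y) (le_trans h1 hyy')
            exact hmonoK _ _ h2 (hfg_le y')
          · simp only [hσ, if_neg hy, if_neg hy'a, if_pos hy2, if_neg hy'2]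
            exact le_trans (hle _) hs'2
        · have hy'2 : ¬ y' < b := fun h => hy2 (lt_of_le_of_lt hyy' h)
          simp [hσ, hy, hy'a, hy2, hy'2]
    have hclose : ∀ y, edist (w y) (u (σ y)) ≤ ENNReal.ofReal δ₀ := by
      intro y
      by_cases hy : y < a
      · rw [hout y fun h => absurd h.1 (not_le.2 hy)]
        simp only [hσ, if_pos hy]
        rw [edist_le_ofReal hδ₀pos.le, dist_eq_norm, zero_sub, norm_neg]
        exact hs1
      · by_cases hy2 : y < b
        · have heq : w y = u (σ y) := by
            simp only [hw, hσ, if_neg hy, if_pos hy2, if_pos (⟨not_lt.1 hy, hy2⟩ : a ≤ y ∧ y < b)]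
          rw [heq, edist_self]
          exact zero_le
        · rw [hout y fun h => absurd h.2 hy2]
          simp only [hσ, if_neg hy, if_neg hy2]
          rw [edist_le_ofReal hδ₀pos.le, dist_eq_norm, zero_sub, norm_neg]
          exact hs'1
    calc ∑ i ∈ Finset.range m, edist (w (x (i + 1))) (w (x i))
        ≤ ∑ i ∈ Finset.range m,
            (edist (u (σ (x (i + 1)))) (u (σ (x i))) + 2 * ENNReal.ofReal δ₀) := by
          refine Finset.sum_le_sum fun i _ => ?_
          calc edist (w (x (i + 1))) (w (x i))
              ≤ edist (w (x (i + 1))) (u (σ (x (i + 1)))) +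
                edist (u (σ (x (i + 1)))) (u (σ (x i))) + edist (u (σ (x i))) (w (x i)) :=
                edist_triangle4 _ _ _ _
            _ ≤ ENNReal.ofReal δ₀ + edist (u (σ (x (i + 1)))) (u (σ (x i))) +
                ENNReal.ofReal δ₀ := by
                gcongr
                · exact hclose _
                · rw [edist_comm]; exact hclose _
            _ = edist (u (σ (x (i + 1)))) (u (σ (x i))) + 2 * ENNReal.ofReal δ₀ := by
                ring
      _ = (∑ i ∈ Finset.range m, edist (u (σ (x (i + 1)))) (u (σ (x i)))) +
            m * (2 * ENNReal.ofReal δ₀) := by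
          rw [Finset.sum_add_distrib, Finset.sum_const, Finset.card_range, nsmul_eq_mul]
      _ ≤ eVariationOn u Set.univ + (η : ℝ≥0∞) := by
          gcongr
          · have h9 := eVariationOn.sum_le (f := u) (n := m) (hσmono.comp hxm)
              (fun i => mem_univ ((σ ∘ x) i))
            simpa [Function.comp] using h9
          · have heq2 : (m : ℝ≥0∞) * (2 * ENNReal.ofReal δ₀) =
                ENNReal.ofReal ((m : ℝ) * (2 * δ₀)) := by
              rw [ENNReal.ofReal_mul (Nat.cast_nonneg m), ENNReal.ofReal_mul (by norm_num : (0:ℝ) ≤ 2)]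
              rw [ENNReal.ofReal_natCast, ENNReal.ofReal_ofNat]
            rw [heq2]
            have h2 : (m : ℝ) * (2 * δ₀) ≤ (η : ℝ) := by
              have hpos : (0:ℝ) < 2 * m + 2 := by positivity
              have heq3 : (m : ℝ) * (2 * δ₀) = 2 * m * (η : ℝ) / (2 * m + 2) := by
                rw [hδ₀]; ring
              rw [heq3, div_le_iff₀ hpos]
              nlinarith
            calc ENNReal.ofReal ((m : ℝ) * (2 * δ₀)) ≤ ENNReal.ofReal (η : ℝ) :=
                ENNReal.ofReal_le_ofReal h2
              _ = (η : ℝ≥0∞) := ENNReal.ofReal_coe_nnreal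

theorem stmt_9 {n : ℕ} (u uL : ℝ → Fin n → ℝ)
    (hrc : ∀ x : ℝ, Tendsto u (nhdsWithin x (Set.Ioi x)) (nhds (u x)))
    (hlc : ∀ x : ℝ, Tendsto u (nhdsWithin x (Set.Iio x)) (nhds (uL x)))
    (hBV : eVariationOn u Set.univ ≠ ⊤)
    (hint : Integrable u) :
    ∃ v : ℕ → ℝ → Fin n → ℝ,
      (∀ ν, ∃ (N : ℕ) (pts : Fin (N + 1) → ℝ), StrictMono pts ∧
        (∀ y : ℝ, y < pts 0 → v ν y = 0) ∧
        (∀ y : ℝ, pts (Fin.last N) ≤ y → v ν y = 0) ∧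
        (∀ i : Fin N, ∀ y ∈ Set.Ico (pts i.castSucc) (pts i.succ),
          v ν y = v ν (pts i.castSucc)) ∧
        (∀ y : ℝ, v ν y = 0 ∨ ∃ p : ℝ, v ν y = u p ∨ v ν y = uL p)) ∧
      Tendsto (fun ν => ∫ y : ℝ, ‖v ν y - u y‖) atTop (nhds 0) ∧
      TendstoUniformly v u atTop ∧
      ∀ ν, eVariationOn (v ν) Set.univ ≤ eVariationOn u Set.univ := by
  classical
  have hpos : ∀ ν : ℕ, (0:ℝ) < 1 / (ν + 1) := fun ν => by positivity
  choose w N pts hsm h0 hlast hconst hval hunif hintb hTV using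
    fun ν : ℕ => key_approx u hrc hBV hint (1 / (ν + 1)) (1 / (ν + 1)) (hpos ν) (hpos ν)
  refine ⟨w, ?_, ?_, ?_, hTV⟩
  · intro ν
    exact ⟨N ν, pts ν, hsm ν, h0 ν, hlast ν, hconst ν,
      fun y => (hval ν y).imp id (fun ⟨p, hp⟩ => ⟨p, Or.inl hp⟩)⟩
  · refine squeeze_zero (fun ν => integral_nonneg fun y => norm_nonneg _)
      (fun ν => hintb ν) tendsto_one_div_add_atTop_nhds_zero_nat
  · rw [Metric.tendstoUniformly_iff]
    intro ε hε
    obtain ⟨M, hM⟩ := exists_nat_one_div_lt hε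
    filter_upwards [eventually_ge_atTop M] with ν hν x
    have h1 : ‖w ν x - u x‖ ≤ 1 / (ν + 1) := hunif ν x
    have h2 : (1:ℝ) / (ν + 1) ≤ 1 / (M + 1) := by
      apply one_div_le_one_div_of_le (by positivity)
      have : (M:ℝ) ≤ ν := Nat.cast_le.2 hν
      linarith
    rw [dist_comm, dist_eq_norm]
    calc ‖w ν x - u x‖ ≤ 1 / (ν + 1) := h1
      _ ≤ 1 / (M + 1) := h2
      _ < ε := hM
end

section
/- Let D* be a set of piecewise constant functions in L¹(ℝ;Ω), F : D* → [0,∞), and suppose: (a) F is invariant under relocating jump points that preserves the ordered sequence of attained values; (b) F does not increase when one value in the ordered sequence of attained values is removed; (c) for fixed jump points x_1 < ... < x_{N+1}, the map (u_1,...,u_N) ↦ F(Σ_α u_α χ_{[x_α, x_{α+1})}) is continuous. Then F is lower semicontinuous on D* with respect to the L¹ norm: if u_ν ∈ D* converge in L¹ to u ∈ D*, then F(u) ≤ liminf_ν F(u_ν). -/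
open Filter Set MeasureTheory

/-- The piecewise constant function with jump points `pts` and values `vals`
(and value `0` outside `[pts 0, pts N)`). -/
noncomputable def pcf {n N : ℕ} (pts : Fin (N + 1) → ℝ) (vals : Fin N → Fin n → ℝ) :
    ℝ → Fin n → ℝ := fun y =>
  ∑ i : Fin N, Set.indicator (Set.Ico (pts i.castSucc) (pts i.succ)) (fun _ => vals i) y

/-- The set of piecewise constant functions. -/
def pcSet (n : ℕ) : Set (ℝ → Fin n → ℝ) :=
  {f | ∃ (N : ℕ) (pts : Fin (N + 1) → ℝ) (vals : Fin N → Fin n → ℝ),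
    StrictMono pts ∧ f = pcf pts vals}

section Aux

variable {n : ℕ}

lemma pcf_apply_mem {N : ℕ} {pts : Fin (N + 1) → ℝ} (hpts : StrictMono pts)
    (vals : Fin N → Fin n → ℝ) {i : Fin N} {y : ℝ}
    (hy : y ∈ Set.Ico (pts i.castSucc) (pts i.succ)) : pcf pts vals y = vals i := by
  unfold pcf
  rw [Finset.sum_eq_single_of_mem i (Finset.mem_univ i)]
  · rw [Set.indicator_of_mem hy]
  · intro j _ hj
    apply Set.indicator_of_notMem
    intro hyj
    rcases lt_or_gt_of_ne hj with h | h
    · have hle : pts j.succ ≤ pts i.castSucc := hpts.monotone (by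
        have := (Fin.lt_def).1 h
        rw [Fin.le_def]
        simp only [Fin.val_succ, Fin.coe_castSucc]
        omega)
      exact absurd (hyj.2.trans_le (hle.trans hy.1)) (lt_irrefl y)
    · have hle : pts i.succ ≤ pts j.castSucc := hpts.monotone (by
        have := (Fin.lt_def).1 h
        rw [Fin.le_def]
        simp only [Fin.val_succ, Fin.coe_castSucc]
        omega)
      exact absurd (hy.2.trans_le (hle.trans hyj.1)) (lt_irrefl y)

lemma pcf_apply_of_lt {N : ℕ} {pts : Fin (N + 1) → ℝ} (hpts : StrictMono pts)
    (vals : Fin N → Fin n → ℝ) {y : ℝ} (hy : y < pts 0) : pcf pts vals y = 0 := by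
  unfold pcf
  apply Finset.sum_eq_zero
  intro i _
  apply Set.indicator_of_notMem
  intro h
  exact absurd (hy.trans_le ((hpts.monotone (Fin.zero_le _)).trans h.1)) (lt_irrefl y)

lemma pcf_apply_of_ge {N : ℕ} {pts : Fin (N + 1) → ℝ} (hpts : StrictMono pts)
    (vals : Fin N → Fin n → ℝ) {y : ℝ} (hy : pts (Fin.last N) ≤ y) : pcf pts vals y = 0 := by
  unfold pcf
  apply Finset.sum_eq_zero
  intro i _
  apply Set.indicator_of_notMem
  intro h
  exact absurd (h.2.trans_le ((hpts.monotone (Fin.le_last _)).trans hy)) (lt_irrefl y)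

lemma pcf_integrable {N : ℕ} (pts : Fin (N + 1) → ℝ) (vals : Fin N → Fin n → ℝ) :
    Integrable (pcf pts vals) volume := by
  unfold pcf
  apply integrable_finset_sum
  intro i _
  rw [integrable_indicator_iff measurableSet_Ico]
  refine integrableOn_const ?_
  rw [Real.volume_Ico]
  exact ENNReal.ofReal_ne_top

lemma exists_Ico_mem {K : ℕ} {T : Fin (K + 1) → ℝ} (hT : StrictMono T) {y : ℝ}
    (h0 : T 0 ≤ y) (h1 : y < T (Fin.last K)) :
    ∃ j : Fin K, y ∈ Set.Ico (T j.castSucc) (T j.succ) := by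
  classical
  set s : Finset (Fin (K + 1)) := Finset.univ.filter (fun i => T i ≤ y) with hs_def
  have hs : s.Nonempty := ⟨0, by simp [hs_def, h0]⟩
  have hi₀ : T (s.max' hs) ≤ y := (Finset.mem_filter.1 (s.max'_mem hs)).2
  have hne : s.max' hs ≠ Fin.last K := by
    intro h
    rw [h] at hi₀
    exact absurd h1 (not_lt.2 hi₀)
  obtain ⟨j, hj⟩ : ∃ j : Fin K, j.castSucc = s.max' hs :=
    ⟨(s.max' hs).castPred hne, Fin.castSucc_castPred _ _⟩
  refine ⟨j, by rw [hj]; exact hi₀, ?_⟩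
  by_contra hlt
  push_neg at hlt
  have hmem : j.succ ∈ s := Finset.mem_filter.2 ⟨Finset.mem_univ _, hlt⟩
  have hle := Finset.le_max' s _ hmem
  rw [← hj] at hle
  have h2 := (Fin.le_def).1 hle
  simp only [Fin.val_succ, Fin.coe_castSucc] at h2
  omega

lemma pcf_constant {N : ℕ} {Q : Fin (N + 1) → ℝ} (vals : Fin N → Fin n → ℝ)
    {s t x1 x2 : ℝ} (hQ : ∀ i, Q i ∉ Set.Ioo s t)
    (h1 : x1 ∈ Set.Ico s t) (h2 : x2 ∈ Set.Ico s t) :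
    pcf Q vals x1 = pcf Q vals x2 := by
  unfold pcf
  refine Finset.sum_congr rfl fun i _ => ?_
  have key : ∀ a b : ℝ, a ∈ Set.Ico s t → b ∈ Set.Ico s t →
      a ∈ Set.Ico (Q i.castSucc) (Q i.succ) → b ∈ Set.Ico (Q i.castSucc) (Q i.succ) := by
    intro a b ha hb hai
    constructor
    · by_contra h
      push_neg at h
      exact hQ i.castSucc ⟨hb.1.trans_lt h, lt_of_le_of_lt hai.1 ha.2⟩
    · by_contra h
      push_neg at h
      exact hQ i.succ ⟨ha.1.trans_lt hai.2, lt_of_le_of_lt h hb.2⟩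
  by_cases h : x1 ∈ Set.Ico (Q i.castSucc) (Q i.succ)
  · rw [Set.indicator_of_mem h, Set.indicator_of_mem (key _ _ h1 h2 h)]
  · rw [Set.indicator_of_notMem h,
      Set.indicator_of_notMem (fun hc => h (key _ _ h2 h1 hc))]

lemma pcf_repr {N K : ℕ} {Q : Fin (N + 1) → ℝ} {T : Fin (K + 1) → ℝ} (hQ : StrictMono Q)
    (hT : StrictMono T) (vals : Fin N → Fin n → ℝ)
    (h0 : T 0 ≤ Q 0) (h1 : Q (Fin.last N) ≤ T (Fin.last K))
    (hint : ∀ (j : Fin K) (i : Fin (N + 1)), Q i ∉ Set.Ioo (T j.castSucc) (T j.succ)) :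
    pcf Q vals = pcf T (fun j => pcf Q vals (T j.castSucc)) := by
  funext y
  rcases lt_or_ge y (T 0) with hy | hy0
  · rw [pcf_apply_of_lt hQ vals (hy.trans_le h0), pcf_apply_of_lt hT _ hy]
  rcases le_or_gt (T (Fin.last K)) y with hy1 | hy1
  · rw [pcf_apply_of_ge hQ vals (h1.trans hy1), pcf_apply_of_ge hT _ hy1]
  obtain ⟨j, hj⟩ := exists_Ico_mem hT hy0 hy1
  rw [pcf_apply_mem hT _ hj]
  exact pcf_constant vals (hint j) hj ⟨le_refl _, hT ((Fin.castSucc_lt_succ (i := j)))⟩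

lemma lemA {F : (ℝ → Fin n → ℝ) → ENNReal}
    (hreloc : ∀ (N : ℕ) (pts pts' : Fin (N + 1) → ℝ) (vals : Fin N → Fin n → ℝ),
      StrictMono pts → StrictMono pts' → F (pcf pts vals) = F (pcf pts' vals))
    (hremove : ∀ (N : ℕ) (pts : Fin (N + 2) → ℝ) (pts' : Fin (N + 1) → ℝ)
      (vals : Fin (N + 1) → Fin n → ℝ) (j : Fin (N + 1)),
      StrictMono pts → StrictMono pts' →
      F (pcf pts' (vals ∘ j.succAbove)) ≤ F (pcf pts vals)) :
    ∀ (N M : ℕ) (φ : Fin M → Fin N), StrictMono φ →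
      ∀ (pts : Fin (N + 1) → ℝ) (pts' : Fin (M + 1) → ℝ) (vals : Fin N → Fin n → ℝ),
      StrictMono pts → StrictMono pts' →
      F (pcf pts' (vals ∘ φ)) ≤ F (pcf pts vals) := by
  intro N
  induction N with
  | zero =>
    intro M φ hφ pts pts' vals hp hp'
    cases M with
    | zero =>
      have heq : pcf pts' (vals ∘ φ) = pcf pts vals := by
        funext y
        unfold pcf
        simp
      rw [heq]
    | succ M' => exact (φ 0).elim0
  | succ N' ih =>
    intro M φ hφ pts pts' vals hp hp'
    have hM : M ≤ N' + 1 := by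
      have := Fintype.card_le_of_injective φ hφ.injective
      simpa using this
    rcases eq_or_lt_of_le hM with he | hlt
    · subst he
      have hid : φ = id := by
        have hsurj : Function.Surjective φ :=
          Finite.injective_iff_surjective.1 hφ.injective
        have hrange : Set.range φ = Set.range (id : Fin (N' + 1) → Fin (N' + 1)) := by
          rw [Set.range_id]
          exact Set.range_eq_univ.2 hsurj
        haveI : WellFoundedLT (Fin (N' + 1)) := inferInstance
        exact (hφ.range_inj strictMono_id).1 hrange
      rw [hid]
      exact le_of_eq (hreloc _ pts' pts vals hp' hp)
    · have hj : ∃ j : Fin (N' + 1), j ∉ Set.range φ := by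
        by_contra h
        push_neg at h
        have hsurj : Function.Surjective φ := fun j => h j
        have := Fintype.card_le_of_surjective φ hsurj
        simp at this
        omega
      obtain ⟨j, hj⟩ := hj
      have hψ : ∀ α : Fin M, ∃ z : Fin N', j.succAbove z = φ α := fun α =>
        Fin.exists_succAbove_eq (fun h => hj ⟨α, h⟩)
      choose ψ hψs using hψ
      have hψm : StrictMono ψ := fun a b hab => by
        have h2 := hφ hab
        rw [← hψs a, ← hψs b] at h2
        exact (Fin.strictMono_succAbove j).lt_iff_lt.1 h2
      have hcomp : vals ∘ φ = (vals ∘ j.succAbove) ∘ ψ := by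
        funext α
        simp [Function.comp, hψs]
      have hmidm : StrictMono (fun i : Fin (N' + 1) => (i : ℝ)) := fun a b hab => by
        show ((a : ℕ) : ℝ) < ((b : ℕ) : ℝ)
        exact_mod_cast (Fin.lt_def).1 hab
      calc F (pcf pts' (vals ∘ φ)) = F (pcf pts' ((vals ∘ j.succAbove) ∘ ψ)) := by
            rw [hcomp]
        _ ≤ F (pcf (fun i : Fin (N' + 1) => (i : ℝ)) (vals ∘ j.succAbove)) :=
            ih M ψ hψm _ pts' _ hmidm hp'
        _ ≤ F (pcf pts vals) := hremove N' pts _ vals j hp hmidm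

lemma exists_point {g : ℝ → ℝ} (hg : Integrable g volume) (hg0 : ∀ y, 0 ≤ g y)
    {a b : ℝ} (hab : a < b) {δ : ℝ} (hδ : 0 < δ) :
    ∃ y ∈ Set.Ico a b, g y ≤ ((∫ z, g z) + δ) / (b - a) := by
  by_contra h
  push_neg at h
  set c := ((∫ z, g z) + δ) / (b - a) with hc_def
  have hint1 : ∫ y in Set.Ico a b, g y ≤ ∫ y, g y :=
    setIntegral_le_integral hg (Filter.Eventually.of_forall hg0)
  have hint2 : c * (b - a) ≤ ∫ y in Set.Ico a b, g y := by
    have hmono : ∫ _ in Set.Ico a b, c ≤ ∫ y in Set.Ico a b, g y := by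
      refine setIntegral_mono_on
        (integrableOn_const (by rw [Real.volume_Ico]; exact ENNReal.ofReal_ne_top))
        hg.integrableOn measurableSet_Ico ?_
      intro y hy
      exact (h y hy).le
    rw [setIntegral_const, Real.volume_real_Ico,
      max_eq_left (sub_nonneg.2 hab.le), smul_eq_mul, mul_comm] at hmono
    exact hmono
  have hc : c * (b - a) = (∫ z, g z) + δ :=
    div_mul_cancel₀ _ (sub_ne_zero.2 hab.ne')
  linarith

end Aux

theorem stmt_10 {n : ℕ} (F : (ℝ → Fin n → ℝ) → ENNReal)
    -- (a) invariance under relocation of the jump points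
    (hreloc : ∀ (N : ℕ) (pts pts' : Fin (N + 1) → ℝ) (vals : Fin N → Fin n → ℝ),
      StrictMono pts → StrictMono pts' → F (pcf pts vals) = F (pcf pts' vals))
    -- (b) removing one value from the ordered sequence of attained values decreases F
    (hremove : ∀ (N : ℕ) (pts : Fin (N + 2) → ℝ) (pts' : Fin (N + 1) → ℝ)
      (vals : Fin (N + 1) → Fin n → ℝ) (j : Fin (N + 1)),
      StrictMono pts → StrictMono pts' →
      F (pcf pts' (vals ∘ j.succAbove)) ≤ F (pcf pts vals))
    -- (c) continuity in the values, for fixed jump points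
    (hcontval : ∀ (N : ℕ) (pts : Fin (N + 1) → ℝ), StrictMono pts →
      Continuous fun vals : Fin N → Fin n → ℝ => F (pcf pts vals)) :
    ∀ u ∈ pcSet n, ∀ uν : ℕ → ℝ → Fin n → ℝ, (∀ ν, uν ν ∈ pcSet n) →
      Tendsto (fun ν => ∫ y : ℝ, ‖uν ν y - u y‖) atTop (nhds 0) →
      F u ≤ liminf (fun ν => F (uν ν)) atTop := by
  classical
  rintro u ⟨N, P, V, hP, rfl⟩ uν huν hconv
  choose M Q W hQ hrepr using huν
  -- integrability of the error function
  set g : ℕ → ℝ → ℝ := fun ν y => ‖uν ν y - pcf P V y‖ with hg_def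
  have hgint : ∀ ν, Integrable (g ν) volume := by
    intro ν
    have : Integrable (fun y => uν ν y - pcf P V y) volume := by
      rw [hrepr ν]
      exact (pcf_integrable _ _).sub (pcf_integrable _ _)
    exact this.norm
  -- select good points
  have hsel : ∀ ν (α : Fin N), ∃ y ∈ Set.Ico (P α.castSucc) (P α.succ),
      g ν y ≤ ((∫ z, g ν z) + 1 / ((ν : ℝ) + 1)) / (P α.succ - P α.castSucc) := by
    intro ν α
    exact exists_point (hgint ν) (fun y => norm_nonneg _)
      (hP ((Fin.castSucc_lt_succ (i := α)))) (by positivity)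
  choose y hy hyb using hsel
  set v : ℕ → Fin N → Fin n → ℝ := fun ν α => uν ν (y ν α) with hv_def
  -- key inequality: F (pcf P (v ν)) ≤ F (uν ν)
  have key : ∀ ν, F (pcf P (v ν)) ≤ F (uν ν) := by
    intro ν
    set S₀ : Finset ℝ := Finset.image (Q ν) Finset.univ ∪ Finset.image (y ν) Finset.univ
      with hS₀_def
    have hS₀ : S₀.Nonempty := ⟨Q ν 0, by simp [hS₀_def]⟩
    set c : ℝ := S₀.max' hS₀ + 1 with hc_def
    have hclt : ∀ x ∈ S₀, x < c := fun x hx =>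
      lt_of_le_of_lt (Finset.le_max' _ _ hx) (lt_add_one _)
    set S : Finset ℝ := S₀ ∪ {c} with hS_def
    have hcS : c ∈ S := by simp [hS_def]
    have hS₀S : ∀ x ∈ S₀, x ∈ S := fun x hx => by simp [hS_def, hx]
    set K := S.card - 1 with hK_def
    have hScard : S.card = K + 1 := by
      have : 0 < S.card := Finset.card_pos.2 ⟨c, hcS⟩
      omega
    set T : Fin (K + 1) → ℝ := fun i => S.orderEmbOfFin hScard i with hT_def
    have hTm : StrictMono T := (S.orderEmbOfFin hScard).strictMono
    have hmemT : ∀ x ∈ S, ∃ m : Fin (K + 1), T m = x := by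
      intro x hx
      have : x ∈ Set.range (S.orderEmbOfFin hScard) := by
        rw [Finset.range_orderEmbOfFin]
        exact hx
      obtain ⟨m, hm⟩ := this
      exact ⟨m, hm⟩
    -- boundary conditions
    obtain ⟨m0, hm0⟩ := hmemT (Q ν 0) (hS₀S _ (by simp [hS₀_def]))
    have h0 : T 0 ≤ Q ν 0 := hm0 ▸ hTm.monotone (Fin.zero_le m0)
    obtain ⟨m1, hm1⟩ := hmemT (Q ν (Fin.last (M ν))) (hS₀S _ (by simp [hS₀_def]))
    have h1 : Q ν (Fin.last (M ν)) ≤ T (Fin.last K) := hm1 ▸ hTm.monotone (Fin.le_last m1)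
    have hint : ∀ (j : Fin K) (i : Fin (M ν + 1)),
        Q ν i ∉ Set.Ioo (T j.castSucc) (T j.succ) := by
      intro j i hmem
      obtain ⟨m, hm⟩ := hmemT (Q ν i) (hS₀S _ (by simp [hS₀_def]))
      rw [← hm] at hmem
      have hlt1 := hTm.lt_iff_lt.1 hmem.1
      have hlt2 := hTm.lt_iff_lt.1 hmem.2
      have e1 := (Fin.lt_def).1 hlt1
      have e2 := (Fin.lt_def).1 hlt2
      simp only [Fin.val_succ, Fin.coe_castSucc] at e1 e2
      omega
    have hrepr2 : pcf (Q ν) (W ν) = pcf T (fun j => pcf (Q ν) (W ν) (T j.castSucc)) :=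
      pcf_repr (hQ ν) hTm (W ν) h0 h1 hint
    -- the embedding φ
    have hyS : ∀ α : Fin N, y ν α ∈ S₀ := fun α => by simp [hS₀_def]
    have hφ : ∀ α : Fin N, ∃ jj : Fin K, T jj.castSucc = y ν α := by
      intro α
      obtain ⟨m, hm⟩ := hmemT (y ν α) (hS₀S _ (hyS α))
      have hne : m ≠ Fin.last K := by
        intro h
        obtain ⟨mc, hmc⟩ := hmemT c hcS
        have : c ≤ T (Fin.last K) := hmc ▸ hTm.monotone (Fin.le_last mc)
        rw [← h, hm] at this
        exact absurd (hclt _ (hyS α)) (not_lt.2 this)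
      exact ⟨m.castPred hne, by rw [Fin.castSucc_castPred]; exact hm⟩
    choose φ hφs using hφ
    have hymono : StrictMono (y ν) := by
      intro a b hab
      have h1 : y ν a < P a.succ := (hy ν a).2
      have h2 : P b.castSucc ≤ y ν b := (hy ν b).1
      have h3 : P a.succ ≤ P b.castSucc := hP.monotone (by
        rw [Fin.le_def]
        simp only [Fin.val_succ, Fin.coe_castSucc]
        exact (Fin.lt_def).1 hab)
      linarith
    have hφm : StrictMono φ := by
      intro a b hab
      have : T (φ a).castSucc < T (φ b).castSucc := by
        rw [hφs a, hφs b]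
        exact hymono hab
      have := hTm.lt_iff_lt.1 this
      exact (Fin.castSucc_lt_castSucc_iff).1 this
    have hvals : (fun j => pcf (Q ν) (W ν) (T j.castSucc)) ∘ φ = v ν := by
      funext α
      simp only [Function.comp, hv_def]
      rw [hφs α, hrepr ν]
    calc F (pcf P (v ν)) = F (pcf P ((fun j => pcf (Q ν) (W ν) (T j.castSucc)) ∘ φ)) := by
          rw [hvals]
      _ ≤ F (pcf T (fun j => pcf (Q ν) (W ν) (T j.castSucc))) :=
          lemA hreloc hremove K N φ hφm T P _ hTm hP
      _ = F (uν ν) := by rw [← hrepr2, ← hrepr ν]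
  -- convergence of values
  have hv : Tendsto v atTop (nhds V) := by
    rw [tendsto_pi_nhds]
    intro α
    rw [tendsto_iff_norm_sub_tendsto_zero]
    have hlen : (0 : ℝ) < P α.succ - P α.castSucc :=
      sub_pos.2 (hP ((Fin.castSucc_lt_succ (i := α))))
    have hbound : ∀ ν, ‖v ν α - V α‖ ≤
        ((∫ z, g ν z) + 1 / ((ν : ℝ) + 1)) / (P α.succ - P α.castSucc) := by
      intro ν
      have huy : pcf P V (y ν α) = V α := pcf_apply_mem hP V (hy ν α)
      have : ‖v ν α - V α‖ = g ν (y ν α) := by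
        rw [hg_def, hv_def]
        simp only
        rw [huy]
      rw [this]
      exact hyb ν α
    have hlim : Tendsto (fun ν => ((∫ z, g ν z) + 1 / ((ν : ℝ) + 1)) /
        (P α.succ - P α.castSucc)) atTop (nhds 0) := by
      have := (hconv.add tendsto_one_div_add_atTop_nhds_zero_nat).div_const
        (P α.succ - P α.castSucc)
      simpa using this
    exact squeeze_zero (fun ν => norm_nonneg _) hbound hlim
  have hFv : Tendsto (fun ν => F (pcf P (v ν))) atTop (nhds (F (pcf P V))) :=
    ((hcontval N P hP).tendsto V).comp hv
  calc F (pcf P V) = liminf (fun ν => F (pcf P (v ν))) atTop := (hFv.liminf_eq).symm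
    _ ≤ liminf (fun ν => F (uν ν)) atTop :=
        liminf_le_liminf (Filter.Eventually.of_forall key)
end
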